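/- arXiv:2603.14262 — 2 statements merged into one kernel-verified Lean document; each statement's English description precedes it below -/
import Mathlib

section
/- Let m ≥ 1, k ≥ 2, n ≥ 1, and let P ∈ ℝ[x_1,…,x_n]. Then there exists a unique polynomial P_0 of degree at most mn+(m+1)(k−1)−1 having no monomial divisible by any x_{i_1}^{m+1}⋯x_{i_k}^{m+1}, such that P − P_0 vanishes to order at least k at every point of {0,1,…,m}^n \ {0} and to order at least k−1 at the origin. Moreover deg P_0 ≤ deg P. -/
open MvPolynomial

/-- Iterated partial derivative with multi-index `d`. -/
noncomputable def pderivMulti {n : ℕ} (d : Fin n → ℕ) (P : MvPolynomial (Fin n) ℝ) :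
    MvPolynomial (Fin n) ℝ :=
  (List.finRange n).foldl (fun Q i => (fun R => MvPolynomial.pderiv i R)^[d i] Q) P

/-- `P` vanishes to order at least `k` at `a`. -/
def VanishesToOrder {n : ℕ} (P : MvPolynomial (Fin n) ℝ) (a : Fin n → ℝ) (k : ℕ) : Prop :=
  ∀ d : Fin n → ℕ, ∑ i, d i < k → MvPolynomial.eval a (pderivMulti d P) = 0

/-- `P` is `(m,k)`-reduced: `deg P ≤ mn + (m+1)(k-1) - 1` and no monomial of `P` is
divisible by a product `x_{i₁}^{m+1} ⋯ x_{i_k}^{m+1}`. -/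
def IsMKReduced (m k n : ℕ) (P : MvPolynomial (Fin n) ℝ) : Prop :=
  P.totalDegree ≤ m * n + (m + 1) * (k - 1) - 1 ∧
  ∀ d ∈ P.support, ¬ ∃ f : Fin k → Fin n,
    ∀ i, (m + 1) * (Finset.univ.filter (fun j => f j = i)).card ≤ d i

namespace Stmt17

variable {n : ℕ}

/-- foldl helper -/
noncomputable def pfold (d : Fin n → ℕ) (l : List (Fin n)) (P : MvPolynomial (Fin n) ℝ) :
    MvPolynomial (Fin n) ℝ :=
  l.foldl (fun Q i => (fun R => MvPolynomial.pderiv i R)^[d i] Q) P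

lemma pderivMulti_eq_pfold (d : Fin n → ℕ) (P : MvPolynomial (Fin n) ℝ) :
    pderivMulti d P = pfold d (List.finRange n) P := rfl

lemma iterate_pderiv_add (i : Fin n) (t : ℕ) (P Q : MvPolynomial (Fin n) ℝ) :
    (fun R => MvPolynomial.pderiv i R)^[t] (P + Q)
      = (fun R => MvPolynomial.pderiv i R)^[t] P + (fun R => MvPolynomial.pderiv i R)^[t] Q := by
  induction t generalizing P Q with
  | zero => simp
  | succ t ih => simp [Function.iterate_succ_apply', ih, map_add]

lemma iterate_pderiv_smul (i : Fin n) (t : ℕ) (c : ℝ) (P : MvPolynomial (Fin n) ℝ) :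
    (fun R => MvPolynomial.pderiv i R)^[t] (c • P)
      = c • (fun R => MvPolynomial.pderiv i R)^[t] P := by
  induction t generalizing P with
  | zero => simp
  | succ t ih => simp [Function.iterate_succ_apply', ih, map_smul]

lemma pfold_add (d : Fin n → ℕ) (l : List (Fin n)) (P Q : MvPolynomial (Fin n) ℝ) :
    pfold d l (P + Q) = pfold d l P + pfold d l Q := by
  induction l generalizing P Q with
  | nil => rfl
  | cons i l ih => simp only [pfold, List.foldl_cons, iterate_pderiv_add]; exact ih _ _

lemma pfold_smul (d : Fin n → ℕ) (l : List (Fin n)) (c : ℝ) (P : MvPolynomial (Fin n) ℝ) :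
    pfold d l (c • P) = c • pfold d l P := by
  induction l generalizing P with
  | nil => rfl
  | cons i l ih => simp only [pfold, List.foldl_cons, iterate_pderiv_smul]; exact ih _

lemma pderivMulti_add (d : Fin n → ℕ) (P Q : MvPolynomial (Fin n) ℝ) :
    pderivMulti d (P + Q) = pderivMulti d P + pderivMulti d Q := pfold_add _ _ _ _

lemma pderivMulti_smul (d : Fin n → ℕ) (c : ℝ) (P : MvPolynomial (Fin n) ℝ) :
    pderivMulti d (c • P) = c • pderivMulti d P := pfold_smul _ _ _ _

/-- linear map version -/
noncomputable def pderivMultiL (d : Fin n → ℕ) :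
    MvPolynomial (Fin n) ℝ →ₗ[ℝ] MvPolynomial (Fin n) ℝ where
  toFun := pderivMulti d
  map_add' := pderivMulti_add d
  map_smul' := pderivMulti_smul d

lemma iterate_pderiv_monomial (i : Fin n) (t : ℕ) (e : Fin n →₀ ℕ) (c : ℝ) :
    (fun R => MvPolynomial.pderiv i R)^[t] (monomial e c)
      = ((e i).descFactorial t : ℝ) • monomial (e - Finsupp.single i t) c := by
  induction t with
  | zero => simp
  | succ t ih =>
    rw [Function.iterate_succ_apply']
    show MvPolynomial.pderiv i _ = _
    rw [ih, Derivation.map_smul, pderiv_monomial]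
    have hexp : e - Finsupp.single i t - Finsupp.single i 1 = e - Finsupp.single i (t + 1) := by
      ext j
      rcases eq_or_ne j i with rfl | hj
      · simp [Nat.sub_sub]
      · simp [Finsupp.single_apply, Ne.symm hj]
    have happ : (e - Finsupp.single i t) i = e i - t := by simp
    rw [hexp, happ, ← (monomial _).map_smul, ← (monomial _).map_smul]
    congr 1
    rw [Nat.descFactorial_succ]
    push_cast
    simp only [smul_eq_mul]
    ring


lemma pfold_monomial (d : Fin n → ℕ) (l : List (Fin n)) (hl : l.Nodup)
    (e : Fin n →₀ ℕ) (c : ℝ) :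
    pfold d l (monomial e c)
      = ((∏ i ∈ l.toFinset, (e i).descFactorial (d i) : ℕ) : ℝ) •
          monomial (e - ∑ i ∈ l.toFinset, Finsupp.single i (d i)) c := by
  induction l generalizing e with
  | nil => simp [pfold]
  | cons i l ih =>
    have hi : i ∉ l := (List.nodup_cons.mp hl).1
    have hln : l.Nodup := (List.nodup_cons.mp hl).2
    show pfold d l ((fun R => MvPolynomial.pderiv i R)^[d i] (monomial e c)) = _
    rw [iterate_pderiv_monomial, pfold_smul, ih hln]
    rw [smul_smul]
    have htF : i ∉ l.toFinset := by simpa using hi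
    have h1 : ∀ j ∈ l.toFinset, (e - Finsupp.single i (d i)) j = e j := by
      intro j hj
      have : j ≠ i := by rintro rfl; exact htF hj
      simp [Finsupp.single_apply, Ne.symm this]
    rw [List.toFinset_cons, Finset.prod_insert htF, Finset.sum_insert htF]
    rw [Finset.prod_congr rfl fun j hj => by rw [h1 j hj]]
    congr 1
    · push_cast; ring
    · rw [tsub_tsub]

lemma eval_zero_monomial (u : Fin n →₀ ℕ) (c : ℝ) :
    MvPolynomial.eval (0 : Fin n → ℝ) (monomial u c) = if u = 0 then c else 0 := by
  rw [eval_monomial]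
  rcases eq_or_ne u 0 with rfl | hu
  · simp
  · rw [if_neg hu]
    obtain ⟨i, hi⟩ : ∃ i, u i ≠ 0 := by
      by_contra h; push_neg at h; exact hu (Finsupp.ext h)
    rw [Finsupp.prod]
    rw [Finset.prod_eq_zero (Finsupp.mem_support_iff.mpr hi) (by simp [zero_pow hi])]
    ring

lemma sum_single_eq (d : Fin n → ℕ) :
    ∑ i, Finsupp.single i (d i) = Finsupp.equivFunOnFinite.symm d := by
  ext j
  rw [Finsupp.finset_sum_apply]
  simp [Finsupp.single_apply, Finsupp.equivFunOnFinite]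
  rfl

lemma eval_zero_pderivMulti (d : Fin n → ℕ) (P : MvPolynomial (Fin n) ℝ) :
    MvPolynomial.eval 0 (pderivMulti d P)
      = ((∏ i, (d i).factorial : ℕ) : ℝ) * coeff (Finsupp.equivFunOnFinite.symm d) P := by
  induction P using MvPolynomial.induction_on' with
  | add p q hp hq => rw [pderivMulti_add, map_add, hp, hq, coeff_add]; ring
  | monomial e c =>
    set E := Finsupp.equivFunOnFinite.symm d with hE
    have hEj : ∀ j, E j = d j := fun j => rfl
    rw [pderivMulti_eq_pfold, pfold_monomial d _ (List.nodup_finRange n)]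
    rw [List.toFinset_finRange, sum_single_eq]
    rw [MvPolynomial.smul_eq_C_mul, map_mul, eval_C, coeff_monomial, eval_zero_monomial]
    rcases eq_or_ne e E with he | he
    · subst he
      rw [if_pos rfl, if_pos (tsub_self _), Nat.cast_prod, Nat.cast_prod]
      congr 1
      exact Finset.prod_congr rfl fun i _ => by rw [hEj i, Nat.descFactorial_self]
    · rw [if_neg he, mul_zero]
      by_cases hle : ∀ i, d i ≤ e i
      · have hex : ∃ i, d i < e i := by
          by_contra hcon
          push_neg at hcon
          exact he (Finsupp.ext fun j => le_antisymm (hcon j) (by rw [hEj j] at *; exact hle j))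
        obtain ⟨i, hi⟩ := hex
        rw [if_neg, mul_zero]
        intro h0
        have h1 := congrArg (fun u : Fin n →₀ ℕ => u i) h0
        simp only [Finsupp.coe_tsub, Pi.sub_apply, Finsupp.coe_zero, Pi.zero_apply] at h1
        rw [hEj i] at h1
        omega
      · push_neg at hle
        obtain ⟨i, hi⟩ := hle
        have hz : (e i).descFactorial (d i) = 0 := Nat.descFactorial_eq_zero_iff_lt.mpr hi
        rw [Finset.prod_eq_zero (Finset.mem_univ i) hz]
        simp

/-- Translation `P(x) ↦ P(x + a)`. -/
noncomputable def trans (a : Fin n → ℝ) : MvPolynomial (Fin n) ℝ →ₐ[ℝ] MvPolynomial (Fin n) ℝ :=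
  MvPolynomial.aeval (fun i => X i + C (a i))

lemma pderiv_trans (a : Fin n → ℝ) (i : Fin n) (P : MvPolynomial (Fin n) ℝ) :
    MvPolynomial.pderiv i (trans a P) = trans a (MvPolynomial.pderiv i P) := by
  induction P using MvPolynomial.induction_on with
  | C c => simp [trans, pderiv_C]
  | add p q hp hq => simp [map_add, hp, hq]
  | mul_X p j hp =>
    rw [map_mul, Derivation.leibniz, Derivation.leibniz]
    simp only [smul_eq_mul, map_add, map_mul]
    rw [hp]
    have hX : trans a (X j) = X j + C (a j) := by simp [trans]
    have hdX : MvPolynomial.pderiv i (trans a (X j)) = trans a (MvPolynomial.pderiv i (X j)) := by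
      rw [hX]
      rcases eq_or_ne i j with rfl | hij
      · simp [pderiv_X_self, pderiv_C, trans]
      · rw [pderiv_X_of_ne (Ne.symm hij)]
        simp [pderiv_C, pderiv_X_of_ne (Ne.symm hij), trans]
    rw [hdX, hX]

lemma pfold_trans (a : Fin n → ℝ) (d : Fin n → ℕ) (l : List (Fin n))
    (P : MvPolynomial (Fin n) ℝ) :
    pfold d l (trans a P) = trans a (pfold d l P) := by
  induction l generalizing P with
  | nil => rfl
  | cons i l ih =>
    show pfold d l ((fun R => MvPolynomial.pderiv i R)^[d i] (trans a P)) = _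
    have : (fun R => MvPolynomial.pderiv i R)^[d i] (trans a P)
        = trans a ((fun R => MvPolynomial.pderiv i R)^[d i] P) := by
      induction (d i) generalizing P with
      | zero => rfl
      | succ t iht =>
        rw [Function.iterate_succ_apply', Function.iterate_succ_apply', iht, pderiv_trans]
    rw [this, ih]
    rfl

lemma eval_trans (a : Fin n → ℝ) (x : Fin n → ℝ) (P : MvPolynomial (Fin n) ℝ) :
    MvPolynomial.eval x (trans a P) = MvPolynomial.eval (fun i => x i + a i) P := by
  induction P using MvPolynomial.induction_on with
  | C c => simp [trans]
  | add p q hp hq => simp [map_add, hp, hq]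
  | mul_X p j hp =>
    rw [map_mul, map_mul, hp]
    have : MvPolynomial.eval x (trans a (X j)) = x j + a j := by simp [trans]
    rw [this]
    simp

lemma eval_pderivMulti_eq_coeff_trans (a : Fin n → ℝ) (d : Fin n → ℕ)
    (P : MvPolynomial (Fin n) ℝ) :
    MvPolynomial.eval a (pderivMulti d P)
      = ((∏ i, (d i).factorial : ℕ) : ℝ) *
          coeff (Finsupp.equivFunOnFinite.symm d) (trans a P) := by
  rw [← eval_zero_pderivMulti, pderivMulti_eq_pfold, pderivMulti_eq_pfold, pfold_trans,
    eval_trans]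
  simp

/-- coefficient characterization of VanishesToOrder -/
lemma vanishesToOrder_iff (P : MvPolynomial (Fin n) ℝ) (a : Fin n → ℝ) (k : ℕ) :
    VanishesToOrder P a k ↔
      ∀ e : Fin n →₀ ℕ, (∑ i, e i) < k → coeff e (trans a P) = 0 := by
  constructor
  · intro h e he
    have := h (e : Fin n → ℕ) he
    rw [eval_pderivMulti_eq_coeff_trans] at this
    have hfac : ((∏ i, ((e : Fin n → ℕ) i).factorial : ℕ) : ℝ) ≠ 0 := by
      positivity
    have heq : Finsupp.equivFunOnFinite.symm (e : Fin n → ℕ) = e := by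
      ext j; rfl
    rw [heq] at this
    exact (mul_eq_zero.mp this).resolve_left hfac
  · intro h d hd
    rw [eval_pderivMulti_eq_coeff_trans]
    rw [h _ (by simpa using hd), mul_zero]


lemma vo_mono {P : MvPolynomial (Fin n) ℝ} {a : Fin n → ℝ} {s t : ℕ}
    (h : VanishesToOrder P a s) (hts : t ≤ s) : VanishesToOrder P a t :=
  fun d hd => h d (lt_of_lt_of_le hd hts)

lemma vo_zero (a : Fin n → ℝ) (t : ℕ) : VanishesToOrder (0 : MvPolynomial (Fin n) ℝ) a t := by
  intro d hd
  have : pderivMulti d (0 : MvPolynomial (Fin n) ℝ) = 0 := by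
    simpa using pderivMulti_smul d 0 0
  rw [this, map_zero]

lemma vo_add {P Q : MvPolynomial (Fin n) ℝ} {a : Fin n → ℝ} {t : ℕ}
    (hP : VanishesToOrder P a t) (hQ : VanishesToOrder Q a t) :
    VanishesToOrder (P + Q) a t := by
  intro d hd
  rw [pderivMulti_add, map_add, hP d hd, hQ d hd, add_zero]

lemma vo_smul {P : MvPolynomial (Fin n) ℝ} {a : Fin n → ℝ} {t : ℕ} (c : ℝ)
    (hP : VanishesToOrder P a t) : VanishesToOrder (c • P) a t := by
  intro d hd
  rw [pderivMulti_smul, MvPolynomial.smul_eq_C_mul, map_mul, MvPolynomial.eval_C, hP d hd, mul_zero]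

lemma vo_neg {P : MvPolynomial (Fin n) ℝ} {a : Fin n → ℝ} {t : ℕ}
    (hP : VanishesToOrder P a t) : VanishesToOrder (-P) a t := by
  have := vo_smul (-1 : ℝ) hP
  simpa using this

lemma vo_sub {P Q : MvPolynomial (Fin n) ℝ} {a : Fin n → ℝ} {t : ℕ}
    (hP : VanishesToOrder P a t) (hQ : VanishesToOrder Q a t) :
    VanishesToOrder (P - Q) a t := by
  rw [sub_eq_add_neg]; exact vo_add hP (vo_neg hQ)

lemma vo_sum {ι : Type*} (s : Finset ι) (f : ι → MvPolynomial (Fin n) ℝ)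
    {a : Fin n → ℝ} {t : ℕ} (h : ∀ i ∈ s, VanishesToOrder (f i) a t) :
    VanishesToOrder (∑ i ∈ s, f i) a t := by
  classical
  induction s using Finset.induction with
  | empty => simpa using vo_zero a t
  | @insert x s' hx ih =>
    rw [Finset.sum_insert hx]
    exact vo_add (h x (Finset.mem_insert_self x s'))
      (ih fun i hi => h i (Finset.mem_insert_of_mem hi))

lemma vo_mul {P Q : MvPolynomial (Fin n) ℝ} {a : Fin n → ℝ} {s t : ℕ}
    (hP : VanishesToOrder P a s) (hQ : VanishesToOrder Q a t) :
    VanishesToOrder (P * Q) a (s + t) := by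
  classical
  rw [vanishesToOrder_iff] at *
  intro e he
  rw [map_mul, MvPolynomial.coeff_mul]
  apply Finset.sum_eq_zero
  intro x hx
  have hxe : x.1 + x.2 = e := Finset.HasAntidiagonal.mem_antidiagonal.mp hx
  have hsum : (∑ i, x.1 i) + (∑ i, x.2 i) = ∑ i, e i := by
    rw [← Finset.sum_add_distrib]
    exact Finset.sum_congr rfl fun i _ => by
      rw [← hxe]; simp
  rcases lt_or_ge (∑ i, x.1 i) s with h1 | h1
  · rw [hP x.1 h1, zero_mul]
  · have h2 : (∑ i, x.2 i) < t := by omega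
    rw [hQ x.2 h2, mul_zero]

lemma vo_one_of_eval {P : MvPolynomial (Fin n) ℝ} {a : Fin n → ℝ}
    (h : MvPolynomial.eval a P = 0) : VanishesToOrder P a 1 := by
  rw [vanishesToOrder_iff]
  intro e he
  have he0 : e = 0 := by
    ext j
    have h1 : e j ≤ ∑ i, e i := Finset.single_le_sum (fun i _ => Nat.zero_le _) (Finset.mem_univ j)
    show e j = 0
    omega
  subst he0
  rw [← MvPolynomial.constantCoeff_eq, ← MvPolynomial.eval_zero]
  show MvPolynomial.eval 0 (trans a P) = 0
  rw [eval_trans]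
  simpa using h

lemma vo_mul_left {P Q : MvPolynomial (Fin n) ℝ} {a : Fin n → ℝ} {t : ℕ}
    (hQ : VanishesToOrder Q a t) : VanishesToOrder (P * Q) a t := by
  have hP : VanishesToOrder P a 0 := fun d hd => absurd hd (by omega)
  simpa using vo_mul hP hQ

lemma vo_pow {P : MvPolynomial (Fin n) ℝ} {a : Fin n → ℝ}
    (h : VanishesToOrder P a 1) (t : ℕ) : VanishesToOrder (P ^ t) a t := by
  induction t with
  | zero => exact fun d hd => absurd hd (by omega)
  | succ t ih =>
    rw [pow_succ]
    exact vo_mul ih h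

lemma vo_prod {ι : Type*} (s : Finset ι) (f : ι → MvPolynomial (Fin n) ℝ)
    (ord : ι → ℕ) {a : Fin n → ℝ}
    (h : ∀ i ∈ s, VanishesToOrder (f i) a (ord i)) :
    VanishesToOrder (∏ i ∈ s, f i) a (∑ i ∈ s, ord i) := by
  classical
  induction s using Finset.induction with
  | empty =>
    simp only [Finset.prod_empty, Finset.sum_empty]
    exact fun d hd => absurd hd (by omega)
  | @insert x s' hx ih =>
    rw [Finset.prod_insert hx, Finset.sum_insert hx]
    exact vo_mul (h x (Finset.mem_insert_self x s'))
      (ih fun i hi => h i (Finset.mem_insert_of_mem hi))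


/-! ### degree-support machinery -/

/-- exponent degree -/
def edeg (e : Fin n →₀ ℕ) : ℕ := ∑ i, e i

lemma edeg_eq_sum (e : Fin n →₀ ℕ) : e.sum (fun _ v => v) = edeg e :=
  Finsupp.sum_fintype _ _ (fun _ => rfl)

lemma edeg_add (e f : Fin n →₀ ℕ) : edeg (e + f) = edeg e + edeg f := by
  unfold edeg
  rw [← Finset.sum_add_distrib]
  exact Finset.sum_congr rfl fun i _ => rfl

/-- all monomials have degree < s -/
def DegLT (E : MvPolynomial (Fin n) ℝ) (s : ℕ) : Prop :=
  ∀ e ∈ E.support, edeg e < s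

/-- all monomials have degree ≤ s -/
def DegLE (E : MvPolynomial (Fin n) ℝ) (s : ℕ) : Prop :=
  ∀ e ∈ E.support, edeg e ≤ s

lemma degLE_of_degLT {E : MvPolynomial (Fin n) ℝ} {s : ℕ} (h : DegLT E s) : DegLE E s :=
  fun e he => le_of_lt (h e he)

lemma degLT_zero (s : ℕ) : DegLT (0 : MvPolynomial (Fin n) ℝ) s := by
  intro e he; simp at he

lemma degLT_add {E F : MvPolynomial (Fin n) ℝ} {s : ℕ} (hE : DegLT E s) (hF : DegLT F s) :
    DegLT (E + F) s := by
  classical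
  intro e he
  rcases Finset.mem_union.mp (MvPolynomial.support_add he) with h | h
  · exact hE e h
  · exact hF e h

lemma degLE_monomial (u : Fin n →₀ ℕ) (c : ℝ) : DegLE (monomial u c) (edeg u) := by
  classical
  intro e he
  have := MvPolynomial.support_monomial_subset he
  rw [Finset.mem_singleton] at this
  subst this; exact le_rfl

lemma degLT_mul_of_le_lt {E F : MvPolynomial (Fin n) ℝ} {s t : ℕ}
    (hE : DegLE E s) (hF : DegLT F t) : DegLT (E * F) (s + t) := by
  classical
  intro e he
  obtain ⟨e1, he1, e2, he2, rfl⟩ : ∃ e1 ∈ E.support, ∃ e2 ∈ F.support, e1 + e2 = e := by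
    have := MvPolynomial.support_mul E F he
    rw [Finset.mem_add] at this
    obtain ⟨a, ha, b, hb, hab⟩ := this
    exact ⟨a, ha, b, hb, hab⟩
  rw [edeg_add]
  have := hE _ he1; have := hF _ he2; omega

lemma degLT_mul_of_lt_le {E F : MvPolynomial (Fin n) ℝ} {s t : ℕ}
    (hE : DegLT E s) (hF : DegLE F t) : DegLT (E * F) (s + t) := by
  classical
  intro e he
  obtain ⟨e1, he1, e2, he2, rfl⟩ : ∃ e1 ∈ E.support, ∃ e2 ∈ F.support, e1 + e2 = e := by
    have := MvPolynomial.support_mul E F he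
    rw [Finset.mem_add] at this
    obtain ⟨a, ha, b, hb, hab⟩ := this
    exact ⟨a, ha, b, hb, hab⟩
  rw [edeg_add]
  have := hE _ he1; have := hF _ he2; omega

/-- a polynomial with known leading monomial -/
def Leading (p : MvPolynomial (Fin n) ℝ) (u : Fin n →₀ ℕ) : Prop :=
  ∃ E, p = monomial u 1 + E ∧ DegLT E (edeg u)

lemma leading_monomial (u : Fin n →₀ ℕ) : Leading (monomial u (1:ℝ)) u :=
  ⟨0, by rw [add_zero], degLT_zero _⟩

lemma leading_mul {p q : MvPolynomial (Fin n) ℝ} {u v : Fin n →₀ ℕ}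
    (hp : Leading p u) (hq : Leading q v) : Leading (p * q) (u + v) := by
  obtain ⟨E, rfl, hE⟩ := hp
  obtain ⟨F, rfl, hF⟩ := hq
  refine ⟨monomial u 1 * F + E * monomial v 1 + E * F, by ring_nf; rw [monomial_mul]; ring, ?_⟩
  rw [edeg_add]
  refine degLT_add (degLT_add ?_ ?_) ?_
  · exact degLT_mul_of_le_lt (degLE_monomial u 1) hF
  · exact degLT_mul_of_lt_le hE (degLE_monomial v 1)
  · exact degLT_mul_of_lt_le hE (degLE_of_degLT hF)

lemma leading_pow {p : MvPolynomial (Fin n) ℝ} {u : Fin n →₀ ℕ}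
    (hp : Leading p u) (q : ℕ) : Leading (p ^ q) (q • u) := by
  induction q with
  | zero => simpa using leading_monomial 0
  | succ q ih =>
    rw [pow_succ, succ_nsmul]
    exact leading_mul ih hp

lemma leading_prod {ι : Type*} (s : Finset ι) (p : ι → MvPolynomial (Fin n) ℝ)
    (u : ι → Fin n →₀ ℕ) (h : ∀ i ∈ s, Leading (p i) (u i)) :
    Leading (∏ i ∈ s, p i) (∑ i ∈ s, u i) := by
  classical
  induction s using Finset.induction with
  | empty => simpa using leading_monomial 0
  | @insert x s' hx ih =>
    rw [Finset.prod_insert hx, Finset.sum_insert hx]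
    exact leading_mul (h x (Finset.mem_insert_self x s'))
      (ih fun i hi => h i (Finset.mem_insert_of_mem hi))

/-! ### the grid polynomials -/

/-- `g(x_i) = x_i (x_i - 1) ⋯ (x_i - m)` -/
noncomputable def gP (m : ℕ) (i : Fin n) : MvPolynomial (Fin n) ℝ :=
  ∏ j ∈ Finset.range (m + 1), (X i - C (j : ℝ))

/-- `ĝ(x_i) = (x_i - 1) ⋯ (x_i - m)` -/
noncomputable def ghat (m : ℕ) (i : Fin n) : MvPolynomial (Fin n) ℝ :=
  ∏ j ∈ Finset.range m, (X i - C ((j + 1 : ℕ) : ℝ))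

lemma edeg_single (i : Fin n) (t : ℕ) : edeg (Finsupp.single i t) = t := by
  simp [edeg, Finsupp.single_apply]

lemma leading_linear (i : Fin n) (c : ℝ) : Leading (X i - C c) (Finsupp.single i 1) := by
  have hX : (X i : MvPolynomial (Fin n) ℝ) = monomial (Finsupp.single i 1) 1 := rfl
  refine ⟨-C c, by rw [sub_eq_add_neg, hX], ?_⟩
  intro e he
  classical
  rw [MvPolynomial.support_neg] at he
  have hC : (C c : MvPolynomial (Fin n) ℝ) = monomial 0 c := by rw [MvPolynomial.C_apply]
  rw [hC] at he
  have := MvPolynomial.support_monomial_subset he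
  rw [Finset.mem_singleton] at this
  subst this
  rw [edeg_single]
  simp [edeg]

lemma leading_gP (m : ℕ) (i : Fin n) : Leading (gP m i) (Finsupp.single i (m + 1)) := by
  have h := leading_prod (Finset.range (m+1)) (fun j => X i - C ((j : ℕ) : ℝ))
    (fun _ => Finsupp.single i 1) (fun j _ => leading_linear i _)
  rw [Finset.sum_const, Finset.card_range] at h
  rw [Finsupp.smul_single, smul_eq_mul, mul_one] at h
  exact h

lemma leading_ghat (m : ℕ) (i : Fin n) : Leading (ghat m i) (Finsupp.single i m) := by
  have h := leading_prod (Finset.range m) (fun j => X i - C (((j + 1 : ℕ)) : ℝ))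
    (fun _ => Finsupp.single i 1) (fun j _ => leading_linear i _)
  rw [Finset.sum_const, Finset.card_range] at h
  rw [Finsupp.smul_single, smul_eq_mul, mul_one] at h
  exact h

lemma eval_gP_zero (m : ℕ) (i : Fin n) (x : Fin n → ℝ) (j : ℕ) (hj : j ≤ m)
    (hx : x i = (j : ℝ)) : MvPolynomial.eval x (gP m i) = 0 := by
  unfold gP
  rw [map_prod]
  apply Finset.prod_eq_zero (Finset.mem_range.mpr (by omega : j < m + 1))
  simp [hx]

lemma eval_ghat_zero (m : ℕ) (i : Fin n) (x : Fin n → ℝ) (j : ℕ) (hj1 : 1 ≤ j) (hj : j ≤ m)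
    (hx : x i = (j : ℝ)) : MvPolynomial.eval x (ghat m i) = 0 := by
  unfold ghat
  rw [map_prod]
  apply Finset.prod_eq_zero (Finset.mem_range.mpr (by omega : j - 1 < m))
  have : ((j - 1 : ℕ) : ℝ) + 1 = (j : ℝ) := by
    push_cast [Nat.cast_sub hj1]
    ring
  simp only [map_sub, eval_X, eval_C, hx]
  rw [sub_eq_zero]
  push_cast
  rw [Nat.cast_sub hj1]
  ring


/-! ### combinatorics of the divisibility condition -/

lemma sum_card_fiber {k : ℕ} (f : Fin k → Fin n) :
    ∑ i, (Finset.univ.filter fun j => f j = i).card = k := by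
  classical
  have h1 : ∀ i, (Finset.univ.filter fun j => f j = i).card
      = ∑ j, if f j = i then 1 else 0 := fun i => by
    rw [Finset.card_filter]
  simp_rw [h1]
  rw [Finset.sum_comm]
  have h2 : ∀ j, (∑ i, if f j = i then 1 else 0) = 1 := fun j => by
    rw [Finset.sum_ite_eq]
    simp
  simp_rw [h2]
  simp

lemma exists_fiber : ∀ (k : ℕ) (q : Fin n → ℕ), (∑ i, q i = k) →
    ∃ f : Fin k → Fin n, ∀ i, (Finset.univ.filter fun j => f j = i).card = q i := by
  intro k
  induction k with
  | zero =>
    intro q hq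
    refine ⟨Fin.elim0, fun i => ?_⟩
    have : q i = 0 := by
      have : q i ≤ ∑ i, q i := Finset.single_le_sum (fun _ _ => Nat.zero_le _) (Finset.mem_univ i)
      omega
    rw [this]
    simp
  | succ k ih =>
    intro q hq
    obtain ⟨i₀, hi₀⟩ : ∃ i₀, 0 < q i₀ := by
      by_contra h
      push_neg at h
      have : ∑ i, q i = 0 := Finset.sum_eq_zero fun i _ => by have := h i; omega
      omega
    set q' := Function.update q i₀ (q i₀ - 1) with hq'
    have hsum' : ∑ i, q' i = k := by
      have h1 := Finset.add_sum_erase Finset.univ q (Finset.mem_univ i₀)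
      have h2 := Finset.add_sum_erase Finset.univ q' (Finset.mem_univ i₀)
      have h3 : ∑ i ∈ Finset.univ.erase i₀, q' i = ∑ i ∈ Finset.univ.erase i₀, q i :=
        Finset.sum_congr rfl fun i hi =>
          Function.update_of_ne (Finset.ne_of_mem_erase hi) _ _
      have h4 : q' i₀ = q i₀ - 1 := Function.update_self _ _ _
      omega
    obtain ⟨f', hf'⟩ := ih q' hsum'
    refine ⟨Fin.cons i₀ f', fun i => ?_⟩
    classical
    rw [Finset.card_filter, Fin.sum_univ_succ]
    simp only [Fin.cons_zero, Fin.cons_succ]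
    rw [← Finset.card_filter]
    rw [hf' i]
    rcases eq_or_ne i₀ i with rfl | hne
    · rw [if_pos rfl, hq', Function.update_self]
      omega
    · rw [if_neg hne, hq', Function.update_of_ne (Ne.symm hne)]
      omega

lemma exists_le_sum : ∀ (t k : ℕ) (q : Fin n → ℕ), (∑ i, q i = k + t) →
    ∃ q' : Fin n → ℕ, (∀ i, q' i ≤ q i) ∧ ∑ i, q' i = k := by
  intro t
  induction t with
  | zero => exact fun k q hq => ⟨q, fun i => le_rfl, by omega⟩
  | succ t ih =>
    intro k q hq
    obtain ⟨i₀, hi₀⟩ : ∃ i₀, 0 < q i₀ := by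
      by_contra h
      push_neg at h
      have : ∑ i, q i = 0 := Finset.sum_eq_zero fun i _ => by have := h i; omega
      omega
    set q'' := Function.update q i₀ (q i₀ - 1) with hq''
    have hsum'' : ∑ i, q'' i = k + t := by
      have h1 := Finset.add_sum_erase Finset.univ q (Finset.mem_univ i₀)
      have h2 := Finset.add_sum_erase Finset.univ q'' (Finset.mem_univ i₀)
      have h3 : ∑ i ∈ Finset.univ.erase i₀, q'' i = ∑ i ∈ Finset.univ.erase i₀, q i :=
        Finset.sum_congr rfl fun i hi =>
          Function.update_of_ne (Finset.ne_of_mem_erase hi) _ _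
      have h4 : q'' i₀ = q i₀ - 1 := Function.update_self _ _ _
      omega
    obtain ⟨q', hle, hsum⟩ := ih k q'' hsum''
    refine ⟨q', fun j => ?_, hsum⟩
    rcases eq_or_ne j i₀ with rfl | hne
    · have hx := hle j
      rw [hq'', Function.update_self] at hx
      omega
    · have hx := hle j
      rwa [hq'', Function.update_of_ne hne] at hx

lemma exists_f_iff (m k : ℕ) (d : Fin n →₀ ℕ) :
    (∃ f : Fin k → Fin n, ∀ i, (m + 1) * (Finset.univ.filter fun j => f j = i).card ≤ d i)
      ↔ k ≤ ∑ i, d i / (m + 1) := by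
  constructor
  · rintro ⟨f, hf⟩
    have h1 : ∀ i, (Finset.univ.filter fun j => f j = i).card ≤ d i / (m + 1) := fun i =>
      (Nat.le_div_iff_mul_le (by omega)).mpr (by rw [mul_comm]; exact hf i)
    calc k = ∑ i, (Finset.univ.filter fun j => f j = i).card := (sum_card_fiber f).symm
      _ ≤ ∑ i, d i / (m + 1) := Finset.sum_le_sum fun i _ => h1 i
  · intro hk
    obtain ⟨t, ht⟩ := Nat.exists_eq_add_of_le hk
    obtain ⟨q', hle, hsum⟩ := exists_le_sum t k (fun i => d i / (m + 1)) ht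
    obtain ⟨f, hf⟩ := exists_fiber k q' hsum
    refine ⟨f, fun i => ?_⟩
    rw [hf i]
    calc (m + 1) * q' i ≤ (m + 1) * (d i / (m + 1)) := by
          have := hle i; exact Nat.mul_le_mul_left _ this
      _ ≤ d i := Nat.mul_div_le _ _

/-! ### grid vanishing conditions -/

/-- The vanishing conditions from the theorem. -/
def GridCond (m k : ℕ) (Q : MvPolynomial (Fin n) ℝ) : Prop :=
  (∀ x : Fin n → ℝ, (∀ i, ∃ j : ℕ, j ≤ m ∧ x i = (j : ℝ)) → x ≠ 0 →
    VanishesToOrder Q x k) ∧ VanishesToOrder Q 0 (k - 1)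

lemma gridCond_zero (m k : ℕ) : GridCond m k (0 : MvPolynomial (Fin n) ℝ) :=
  ⟨fun x _ _ => vo_zero x k, vo_zero 0 (k-1)⟩

lemma gridCond_add {m k : ℕ} {Q R : MvPolynomial (Fin n) ℝ}
    (hQ : GridCond m k Q) (hR : GridCond m k R) : GridCond m k (Q + R) :=
  ⟨fun x hx hx0 => vo_add (hQ.1 x hx hx0) (hR.1 x hx hx0), vo_add hQ.2 hR.2⟩

lemma gridCond_sub {m k : ℕ} {Q R : MvPolynomial (Fin n) ℝ}
    (hQ : GridCond m k Q) (hR : GridCond m k R) : GridCond m k (Q - R) :=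
  ⟨fun x hx hx0 => vo_sub (hQ.1 x hx hx0) (hR.1 x hx hx0), vo_sub hQ.2 hR.2⟩

lemma gridCond_smul {m k : ℕ} (c : ℝ) {Q : MvPolynomial (Fin n) ℝ}
    (hQ : GridCond m k Q) : GridCond m k (c • Q) :=
  ⟨fun x hx hx0 => vo_smul c (hQ.1 x hx hx0), vo_smul c hQ.2⟩

lemma gridCond_sum {m k : ℕ} {ι : Type*} (s : Finset ι) (f : ι → MvPolynomial (Fin n) ℝ)
    (h : ∀ i ∈ s, GridCond m k (f i)) : GridCond m k (∑ i ∈ s, f i) :=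
  ⟨fun x hx hx0 => vo_sum s f fun i hi => (h i hi).1 x hx hx0,
    vo_sum s f fun i hi => (h i hi).2⟩

/-- generator of type 1 : multiple of a product of `k` polynomials `g` -/
lemma gridCond_gen1 (m k : ℕ) (hk : 2 ≤ k) (w : Fin n →₀ ℕ) (q : Fin n → ℕ)
    (hq : ∑ i, q i = k) :
    GridCond m k (monomial w (1:ℝ) * ∏ i, gP m i ^ q i) := by
  have key : ∀ x : Fin n → ℝ, (∀ i, ∃ j : ℕ, j ≤ m ∧ x i = (j : ℝ)) →
      VanishesToOrder (monomial w (1:ℝ) * ∏ i, gP m i ^ q i) x k := by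
    intro x hx
    apply vo_mul_left
    rw [← hq]
    apply vo_prod
    intro i _
    obtain ⟨j, hj, hxj⟩ := hx i
    exact vo_pow (vo_one_of_eval (eval_gP_zero m i x j hj hxj)) (q i)
  constructor
  · exact fun x hx _ => key x hx
  · apply vo_mono (key 0 fun i => ⟨0, Nat.zero_le _, by simp⟩)
    omega

/-- generator of type 2 : product of `k-1` polynomials `g` and all `ĝ` -/
lemma gridCond_gen2 (m k : ℕ) (hk : 2 ≤ k) (q : Fin n → ℕ)
    (hq : ∑ i, q i = k - 1) :
    GridCond m k ((∏ i, gP m i ^ q i) * ∏ i, ghat m i) := by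
  have key1 : ∀ x : Fin n → ℝ, (∀ i, ∃ j : ℕ, j ≤ m ∧ x i = (j : ℝ)) →
      VanishesToOrder (∏ i, gP m i ^ q i) x (k - 1) := by
    intro x hx
    rw [← hq]
    apply vo_prod
    intro i _
    obtain ⟨j, hj, hxj⟩ := hx i
    exact vo_pow (vo_one_of_eval (eval_gP_zero m i x j hj hxj)) (q i)
  constructor
  · intro x hx hx0
    obtain ⟨i₀, hi₀⟩ : ∃ i₀, x i₀ ≠ 0 := by
      by_contra h
      push_neg at h
      exact hx0 (funext h)
    obtain ⟨j, hj, hxj⟩ := hx i₀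
    have hj1 : 1 ≤ j := by
      rcases Nat.eq_zero_or_pos j with rfl | h
      · exact absurd (by simpa using hxj) hi₀
      · exact h
    have hghat : VanishesToOrder (∏ i, ghat m i) x 1 := by
      rw [← Finset.mul_prod_erase Finset.univ _ (Finset.mem_univ i₀)]
      have h1 : VanishesToOrder (ghat m i₀) x 1 :=
        vo_one_of_eval (eval_ghat_zero m i₀ x j hj1 hj hxj)
      have h0 : VanishesToOrder (∏ i ∈ Finset.univ.erase i₀, ghat m i) x 0 :=
        fun d hd => absurd hd (by omega)
      simpa using vo_mul h1 h0
    have := vo_mul (key1 x hx) hghat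
    have hkk : k - 1 + 1 = k := by omega
    rwa [hkk] at this
  · have h0 : VanishesToOrder (∏ i, ghat m i) (0 : Fin n → ℝ) 0 :=
      fun d hd => absurd hd (by omega)
    have := vo_mul (key1 0 fun i => ⟨0, Nat.zero_le _, by simp⟩) h0
    simpa using this


/-! ### the reduction -/

/-- A "good" (reduced) exponent. -/
def Good (m k : ℕ) (d : Fin n →₀ ℕ) : Prop :=
  (¬ ∃ f : Fin k → Fin n,
      ∀ i, (m + 1) * (Finset.univ.filter (fun j => f j = i)).card ≤ d i) ∧
    edeg d ≤ m * n + (m + 1) * (k - 1) - 1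

lemma degLT_totalDegree {E : MvPolynomial (Fin n) ℝ} {s : ℕ} (h : DegLT E s) :
    E.totalDegree ≤ s - 1 := by
  apply Finset.sup_le
  intro e he
  have h1 := h e he
  rw [edeg_eq_sum]
  omega

lemma good_totalDegree {m k : ℕ} {P : MvPolynomial (Fin n) ℝ}
    (h : ∀ d ∈ P.support, Good m k d) :
    P.totalDegree ≤ m * n + (m + 1) * (k - 1) - 1 := by
  apply Finset.sup_le
  intro e he
  rw [edeg_eq_sum]
  exact (h e he).2

/-- reduction step : every bad monomial is the leading part of a grid-vanishing polynomial -/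
lemma step (m k : ℕ) (hm : 1 ≤ m) (hk : 2 ≤ k) (hn : 1 ≤ n) (d : Fin n →₀ ℕ)
    (hbad : ¬ Good m k d) :
    ∃ B E : MvPolynomial (Fin n) ℝ, GridCond m k B ∧ B = monomial d 1 + E ∧
      DegLT E (edeg d) ∧ 1 ≤ edeg d := by
  classical
  by_cases hf : ∃ f : Fin k → Fin n,
      ∀ i, (m + 1) * (Finset.univ.filter (fun j => f j = i)).card ≤ d i
  · obtain ⟨f, hfle⟩ := hf
    set q : Fin n → ℕ := fun i => (Finset.univ.filter (fun j => f j = i)).card with hqdef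
    have hq : ∑ i, q i = k := sum_card_fiber f
    set u : Fin n →₀ ℕ := ∑ i, Finsupp.single i (q i * (m + 1)) with hudef
    have hu : ∀ j, u j = q j * (m + 1) := by
      intro j
      rw [hudef, sum_single_eq]
      rfl
    have hule : ∀ j, u j ≤ d j := fun j => by rw [hu j, mul_comm]; exact hfle j
    set w : Fin n →₀ ℕ := d - u with hwdef
    have hwu : w + u = d := by
      ext j
      simp only [Finsupp.add_apply, hwdef, Finsupp.tsub_apply]
      have := hule j
      omega
    have hlead : Leading (monomial w (1:ℝ) * ∏ i, gP m i ^ q i) d := by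
      have h1 : Leading (∏ i, gP m i ^ q i) u := by
        rw [hudef]
        apply leading_prod
        intro i _
        have := leading_pow (leading_gP m i) (q i)
        rwa [Finsupp.smul_single, smul_eq_mul] at this
      have := leading_mul (leading_monomial w) h1
      rwa [hwu] at this
    obtain ⟨E, hBE, hE⟩ := hlead
    refine ⟨_, E, gridCond_gen1 m k hk w q hq, hBE, hE, ?_⟩
    have h2 : (m + 1) * k ≤ ∑ i, d i := by
      calc (m + 1) * k = ∑ i, (m + 1) * q i := by rw [← hq, Finset.mul_sum]
        _ ≤ ∑ i, d i := Finset.sum_le_sum fun i _ => hfle i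
    have h3 : 0 < (m + 1) * k := Nat.mul_pos (by omega) (by omega)
    unfold edeg
    omega
  · have hdeg : m * n + (m + 1) * (k - 1) ≤ edeg d := by
      rcases Nat.lt_or_ge (edeg d) (m * n + (m + 1) * (k - 1)) with h | h
      · exact absurd ⟨hf, by omega⟩ hbad
      · exact h
    set q : Fin n → ℕ := fun i => d i / (m + 1) with hqdef
    set r : Fin n → ℕ := fun i => d i % (m + 1) with hrdef
    have hdi : ∀ i, d i = (m + 1) * q i + r i := fun i => (Nat.div_add_mod _ _).symm
    have hrm : ∀ i, r i ≤ m := fun i => by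
      have h := Nat.mod_lt (d i) (show 0 < m + 1 by omega)
      show d i % (m + 1) ≤ m
      omega
    have hq : ∑ i, q i ≤ k - 1 := by
      have h := (exists_f_iff m k d).not.mp hf
      show ∑ i, d i / (m + 1) ≤ k - 1
      omega
    have hsplit : edeg d = (m + 1) * (∑ i, q i) + ∑ i, r i := by
      unfold edeg
      rw [Finset.mul_sum, ← Finset.sum_add_distrib]
      exact Finset.sum_congr rfl fun i _ => hdi i
    have hrsum_le : ∑ i, r i ≤ m * n := by
      calc ∑ i, r i ≤ ∑ _i : Fin n, m := Finset.sum_le_sum fun i _ => hrm i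
        _ = m * n := by rw [Finset.sum_const, Finset.card_univ, Fintype.card_fin,
            smul_eq_mul, mul_comm]
    have hqq : (m + 1) * (∑ i, q i) ≤ (m + 1) * (k - 1) := Nat.mul_le_mul_left _ hq
    have hqsum : ∑ i, q i = k - 1 := by
      have h1 : (m + 1) * (k - 1) ≤ (m + 1) * (∑ i, q i) := by omega
      have h2 := Nat.le_of_mul_le_mul_left h1 (show 0 < m + 1 by omega)
      omega
    have hrsum : ∑ i, r i = m * n := by omega
    have hri : ∀ i, r i = m := by
      by_contra hcon
      push_neg at hcon
      obtain ⟨i₀, hi₀⟩ := hcon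
      have hlt : ∑ i, r i < ∑ _i : Fin n, m := by
        apply Finset.sum_lt_sum (fun i _ => hrm i)
        exact ⟨i₀, Finset.mem_univ i₀, lt_of_le_of_ne (hrm i₀) hi₀⟩
      rw [Finset.sum_const, Finset.card_univ, Fintype.card_fin, smul_eq_mul, mul_comm] at hlt
      omega
    have hlead : Leading (∏ i, (gP m i ^ q i * ghat m i)) d := by
      have h1 : ∀ i, Leading (gP m i ^ q i * ghat m i) (Finsupp.single i (d i)) := by
        intro i
        have h2 := leading_mul (leading_pow (leading_gP m i) (q i)) (leading_ghat m i)
        rwa [Finsupp.smul_single, smul_eq_mul, ← Finsupp.single_add,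
          show q i * (m + 1) + m = d i by rw [hdi i, hri i]; ring] at h2
      have := leading_prod Finset.univ _ (fun i => Finsupp.single i (d i)) fun i _ => h1 i
      rwa [show (∑ i, Finsupp.single i (d i)) = d by
        rw [sum_single_eq]; ext j; rfl] at this
    obtain ⟨E, hBE, hE⟩ := hlead
    refine ⟨_, E, ?_, hBE, hE, ?_⟩
    · rw [Finset.prod_mul_distrib]
      exact gridCond_gen2 m k hk q hqsum
    · have : 1 * 1 ≤ m * n := Nat.mul_le_mul hm hn
      omega

/-- main reduction lemma -/
lemma reduction (m k : ℕ) (hm : 1 ≤ m) (hk : 2 ≤ k) (hn : 1 ≤ n) :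
    ∀ D : ℕ, ∀ P : MvPolynomial (Fin n) ℝ, P.totalDegree ≤ D →
    ∃ P₀ : MvPolynomial (Fin n) ℝ, (∀ d ∈ P₀.support, Good m k d) ∧
      P₀.totalDegree ≤ P.totalDegree ∧ GridCond m k (P - P₀) := by
  intro D
  induction D using Nat.strong_induction_on with
  | _ D ih =>
  intro P hPD
  classical
  set Sb := P.support.filter (fun d => ¬ Good m k d) with hSbdef
  by_cases hSb : Sb = ∅
  · refine ⟨P, fun d hd => ?_, le_rfl, by rw [sub_self]; exact gridCond_zero m k⟩
    by_contra hbad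
    have : d ∈ Sb := Finset.mem_filter.mpr ⟨hd, hbad⟩
    rw [hSb] at this
    simp at this
  · have hSbne : Sb.Nonempty := Finset.nonempty_of_ne_empty hSb
    have hstep : ∀ d ∈ Sb, ∃ B E : MvPolynomial (Fin n) ℝ,
        GridCond m k B ∧ B = monomial d 1 + E ∧ DegLT E (edeg d) ∧ 1 ≤ edeg d := by
      intro d hd
      exact step m k hm hk hn d (Finset.mem_filter.mp hd).2
    choose Bf Ef hBgc hBE hElt hedeg using hstep
    have hedegle : ∀ d ∈ Sb, edeg d ≤ P.totalDegree := by
      intro d hd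
      have hmem : d ∈ P.support := (Finset.mem_filter.mp hd).1
      have := MvPolynomial.le_totalDegree hmem
      rwa [edeg_eq_sum] at this
    have hP1 : 1 ≤ P.totalDegree := by
      obtain ⟨d₀, hd₀⟩ := hSbne
      have := hedeg d₀ hd₀
      have := hedegle d₀ hd₀
      omega
    set Pg : MvPolynomial (Fin n) ℝ :=
      ∑ d ∈ P.support.filter (fun d => Good m k d), monomial d (coeff d P) with hPgdef
    set Pb : MvPolynomial (Fin n) ℝ :=
      ∑ d ∈ Sb, monomial d (coeff d P) with hPbdef
    have hPsplit : Pg + Pb = P := by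
      rw [hPgdef, hPbdef, hSbdef]
      rw [Finset.sum_filter_add_sum_filter_not]
      exact MvPolynomial.support_sum_monomial_coeff P
    set S : MvPolynomial (Fin n) ℝ :=
      ∑ d ∈ Sb.attach, coeff d.1 P • Ef d.1 d.2 with hSdef
    set BB : MvPolynomial (Fin n) ℝ :=
      ∑ d ∈ Sb.attach, coeff d.1 P • Bf d.1 d.2 with hBBdef
    have hBBsplit : BB = Pb + S := by
      rw [hBBdef, hPbdef, hSdef, ← Finset.sum_attach Sb (fun d => monomial d (coeff d P)),
        ← Finset.sum_add_distrib]
      apply Finset.sum_congr rfl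
      intro d _
      rw [hBE d.1 d.2, smul_add, MvPolynomial.smul_monomial, smul_eq_mul, mul_one]
    have hSdeg : S.totalDegree ≤ P.totalDegree - 1 := by
      refine le_trans (MvPolynomial.totalDegree_finset_sum _ _) (Finset.sup_le fun d _ => ?_)
      refine le_trans (MvPolynomial.totalDegree_smul_le _ _) ?_
      have h1 := degLT_totalDegree (hElt d.1 d.2)
      have h2 := hedegle d.1 d.2
      omega
    obtain ⟨S₀, hS₀good, hS₀deg, hS₀gc⟩ := ih (P.totalDegree - 1) (by omega) S hSdeg
    refine ⟨Pg - S₀, ?_, ?_, ?_⟩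
    · intro d hd
      rcases Finset.mem_union.mp (MvPolynomial.support_sub _ _ _ hd) with h | h
      · have h2 := MvPolynomial.support_sum h
        rw [Finset.mem_biUnion] at h2
        obtain ⟨e, he, hde⟩ := h2
        have := MvPolynomial.support_monomial_subset hde
        rw [Finset.mem_singleton] at this
        subst this
        exact (Finset.mem_filter.mp he).2
      · exact hS₀good d h
    · refine le_trans (MvPolynomial.totalDegree_sub _ _) (max_le ?_ ?_)
      · refine le_trans (MvPolynomial.totalDegree_finset_sum _ _) (Finset.sup_le fun d hd => ?_)
        refine le_trans (MvPolynomial.totalDegree_monomial_le _ _) ?_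
        exact MvPolynomial.le_totalDegree (Finset.mem_filter.mp hd).1
      · omega
    · have hkey : P - (Pg - S₀) = BB - (S - S₀) := by
        rw [hBBsplit, ← hPsplit]
        ring
      rw [hkey]
      apply gridCond_sub
      · rw [hBBdef]
        exact gridCond_sum _ _ fun d _ => gridCond_smul _ (hBgc d.1 d.2)
      · exact hS₀gc

/-! ### the linear conditions -/

/-- Index type of the linear conditions: a grid point `a` and a derivative multi-index `e`. -/
def Idx (m k n : ℕ) : Type :=
  {p : (Fin n → Fin (m+1)) × (Fin n → Fin k) //
    (∑ i, (p.2 i : ℕ)) < (if p.1 = 0 then k - 1 else k)}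

instance (m k n : ℕ) : DecidableEq (Idx m k n) := by
  unfold Idx
  classical
  infer_instance

noncomputable instance (m k n : ℕ) : Fintype (Idx m k n) := by
  unfold Idx
  classical
  infer_instance

/-- real coordinates of a grid point -/
def coePt {n : ℕ} (m : ℕ) (a : Fin n → Fin (m+1)) : Fin n → ℝ := fun i => ((a i : ℕ) : ℝ)

lemma coePt_zero {n m : ℕ} : coePt m (0 : Fin n → Fin (m+1)) = 0 := by
  funext i
  simp [coePt]

lemma coePt_inj {n m : ℕ} {a b : Fin n → Fin (m+1)} (h : coePt m a = coePt m b) : a = b := by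
  funext i
  have := congrFun h i
  simp only [coePt] at this
  exact Fin.ext (Nat.cast_injective this)

noncomputable def Lmap (m k n : ℕ) : MvPolynomial (Fin n) ℝ →ₗ[ℝ] (Idx m k n → ℝ) where
  toFun P := fun idx =>
    MvPolynomial.eval (coePt m idx.1.1) (pderivMulti (fun i => (idx.1.2 i : ℕ)) P)
  map_add' P Q := by
    funext idx
    simp only [pderivMulti_add, map_add]
    rfl
  map_smul' c P := by
    funext idx
    show MvPolynomial.eval _ (pderivMulti _ (c • P)) = _
    rw [pderivMulti_smul, MvPolynomial.smul_eq_C_mul, map_mul, MvPolynomial.eval_C]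
    rfl

lemma gridCond_iff_Lmap {m k n : ℕ} (Q : MvPolynomial (Fin n) ℝ) :
    GridCond m k Q ↔ Lmap m k n Q = 0 := by
  constructor
  · intro hQ
    funext idx
    obtain ⟨⟨a, e⟩, hp⟩ := idx
    show MvPolynomial.eval (coePt m a) (pderivMulti (fun i => (e i : ℕ)) Q) = 0
    rcases eq_or_ne a 0 with rfl | ha
    · rw [coePt_zero]
      apply hQ.2
      rw [if_pos rfl] at hp
      exact hp
    · apply hQ.1 (coePt m a) (fun i => ⟨(a i : ℕ), by have := (a i).is_le; omega, rfl⟩)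
      · intro h0
        exact ha (coePt_inj (h0.trans coePt_zero.symm))
      · rw [if_neg ha] at hp
        exact hp
  · intro h
    constructor
    · intro x hx hx0 d hd
      choose j hj hxj using hx
      set a : Fin n → Fin (m+1) := fun i => ⟨j i, by have := hj i; omega⟩ with hadef
      have hxa : x = coePt m a := by funext i; exact hxj i
      have ha : a ≠ 0 := by
        intro h0
        apply hx0
        rw [hxa, h0, coePt_zero]
      have hdk : ∀ i, d i < k := fun i => by
        have : d i ≤ ∑ i, d i := Finset.single_le_sum (fun _ _ => Nat.zero_le _) (Finset.mem_univ i)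
        omega
      set e : Fin n → Fin k := fun i => ⟨d i, hdk i⟩ with hedef
      have hidx : (∑ i, (e i : ℕ)) < (if a = 0 then k - 1 else k) := by
        rw [if_neg ha]
        exact hd
      have := congrFun h ⟨(a, e), hidx⟩
      rw [hxa]
      exact this
    · intro d hd
      rcases Nat.eq_zero_or_pos k with rfl | hk0
      · exact absurd hd (by omega)
      have hdk : ∀ i, d i < k := fun i => by
        have : d i ≤ ∑ i, d i := Finset.single_le_sum (fun _ _ => Nat.zero_le _) (Finset.mem_univ i)
        omega
      set e : Fin n → Fin k := fun i => ⟨d i, hdk i⟩ with hedef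
      have hidx : (∑ i, (e i : ℕ)) < (if (0 : Fin n → Fin (m+1)) = 0 then k - 1 else k) := by
        rw [if_pos rfl]
        exact hd
      have := congrFun h ⟨(0, e), hidx⟩
      rw [← coePt_zero (n := n) (m := m)]
      exact this

/-! ### interpolation polynomials and surjectivity -/

lemma prod_monomial {n : ℕ} {ι : Type*} (s : Finset ι) (u : ι → (Fin n →₀ ℕ)) :
    (∏ i ∈ s, (monomial (u i) (1:ℝ) : MvPolynomial (Fin n) ℝ)) = monomial (∑ i ∈ s, u i) 1 := by
  classical
  induction s using Finset.induction with
  | empty => simp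
  | @insert x s' hx ih =>
    rw [Finset.prod_insert hx, Finset.sum_insert hx, ih, monomial_mul, one_mul]

lemma prod_X_pow {n : ℕ} (t : Fin n → ℕ) :
    (∏ i, (X i : MvPolynomial (Fin n) ℝ) ^ t i)
      = monomial (Finsupp.equivFunOnFinite.symm t) 1 := by
  have h1 : ∀ i, (X i : MvPolynomial (Fin n) ℝ) ^ t i = monomial (Finsupp.single i (t i)) 1 :=
    fun i => MvPolynomial.X_pow_eq_monomial
  simp_rw [h1]
  rw [prod_monomial, sum_single_eq]

lemma coeff_zero_trans {n : ℕ} (a : Fin n → ℝ) (Q : MvPolynomial (Fin n) ℝ) :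
    coeff 0 (trans a Q) = MvPolynomial.eval a Q := by
  rw [← MvPolynomial.constantCoeff_eq, ← MvPolynomial.eval_zero]
  show MvPolynomial.eval 0 (trans a Q) = _
  rw [eval_trans, show (fun i => (0 : Fin n → ℝ) i + a i) = a from funext fun i => by simp]

/-- exponent vector of a derivative multi-index -/
noncomputable def uexp {n k : ℕ} (e : Fin n → Fin k) : Fin n →₀ ℕ :=
  Finsupp.equivFunOnFinite.symm (fun i => (e i : ℕ))

/-- index picking a coordinate where `b` differs from `a` -/
noncomputable def pickIdx {n m : ℕ} (a b : Fin n → Fin (m+1)) (h : b ≠ a) : Fin n :=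
  Classical.choose (Function.ne_iff.mp h)

lemma pickIdx_spec {n m : ℕ} (a b : Fin n → Fin (m+1)) (h : b ≠ a) :
    b (pickIdx a b h) ≠ a (pickIdx a b h) :=
  Classical.choose_spec (Function.ne_iff.mp h)

/-- interpolation polynomial concentrated at `(a, e)` -/
noncomputable def PInt (m k n : ℕ) (a : Fin n → Fin (m+1)) (e : Fin n → Fin k) :
    MvPolynomial (Fin n) ℝ :=
  (∏ i, (X i - C (coePt m a i)) ^ (e i : ℕ)) *
    ∏ b ∈ (Finset.univ.erase a).attach,
      (X (pickIdx a b.1 (Finset.mem_erase.mp b.2).1)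
        - C (coePt m b.1 (pickIdx a b.1 (Finset.mem_erase.mp b.2).1))) ^ k

lemma vo_prod_of_mem {ι : Type*} (s : Finset ι) (f : ι → MvPolynomial (Fin n) ℝ)
    {x : ι} {a : Fin n → ℝ} {t : ℕ} (hx : x ∈ s) (h : VanishesToOrder (f x) a t) :
    VanishesToOrder (∏ i ∈ s, f i) a t := by
  classical
  rw [← Finset.mul_prod_erase s f hx]
  have h0 : VanishesToOrder (∏ i ∈ s.erase x, f i) a 0 := fun d hd => absurd hd (by omega)
  simpa using vo_mul h h0

lemma vo_PInt_other {m k n : ℕ} (a b' : Fin n → Fin (m+1)) (e : Fin n → Fin k)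
    (hb : b' ≠ a) : VanishesToOrder (PInt m k n a e) (coePt m b') k := by
  classical
  unfold PInt
  apply vo_mul_left
  have hmem : (⟨b', Finset.mem_erase.mpr ⟨hb, Finset.mem_univ b'⟩⟩ :
      {x // x ∈ Finset.univ.erase a}) ∈ (Finset.univ.erase a).attach := Finset.mem_attach _ _
  apply vo_prod_of_mem _ _ hmem
  apply vo_pow
  apply vo_one_of_eval
  simp

lemma trans_PInt {m k n : ℕ} (a : Fin n → Fin (m+1)) (e : Fin n → Fin k) :
    trans (coePt m a) (PInt m k n a e)
      = monomial (uexp e) 1 *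
          trans (coePt m a) (∏ b ∈ (Finset.univ.erase a).attach,
            (X (pickIdx a b.1 (Finset.mem_erase.mp b.2).1)
              - C (coePt m b.1 (pickIdx a b.1 (Finset.mem_erase.mp b.2).1))) ^ k) := by
  unfold PInt
  rw [map_mul]
  congr 1
  rw [map_prod]
  have h1 : ∀ i, trans (coePt m a) ((X i - C (coePt m a i)) ^ (e i : ℕ))
      = (X i : MvPolynomial (Fin n) ℝ) ^ (e i : ℕ) := by
    intro i
    rw [map_pow, map_sub]
    have hX : trans (coePt m a) (X i) = X i + C (coePt m a i) := by simp [trans]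
    have hC : trans (coePt m a) (C (coePt m a i)) = C (coePt m a i) := by simp [trans]
    rw [hX, hC]
    ring_nf
  simp_rw [h1]
  rw [prod_X_pow]
  rfl

lemma eval_PInt_U_ne {m k n : ℕ} (a : Fin n → Fin (m+1)) :
    MvPolynomial.eval (coePt m a) (∏ b ∈ (Finset.univ.erase a).attach,
      (X (pickIdx a b.1 (Finset.mem_erase.mp b.2).1)
        - C (coePt m b.1 (pickIdx a b.1 (Finset.mem_erase.mp b.2).1))) ^ k) ≠ 0 := by
  rw [map_prod]
  apply Finset.prod_ne_zero_iff.mpr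
  intro b _
  rw [map_pow]
  apply pow_ne_zero
  simp only [map_sub, eval_X, eval_C]
  rw [sub_ne_zero]
  intro hcast
  have hne := pickIdx_spec a b.1 (Finset.mem_erase.mp b.2).1
  apply hne
  simp only [coePt] at hcast
  exact Fin.ext (Nat.cast_injective (R := ℝ) hcast.symm)

lemma Lmap_PInt {m k n : ℕ} (a : Fin n → Fin (m+1)) (e e' : Fin n → Fin k)
    (hp : (∑ i, ((e' : Fin n → Fin k) i : ℕ)) < (if a = 0 then k - 1 else k)) :
    Lmap m k n (PInt m k n a e) ⟨(a, e'), hp⟩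
      = ((∏ i, ((e' i : ℕ)).factorial : ℕ) : ℝ) *
          (if uexp e ≤ uexp e' then
            coeff (uexp e' - uexp e) (trans (coePt m a)
              (∏ b ∈ (Finset.univ.erase a).attach,
                (X (pickIdx a b.1 (Finset.mem_erase.mp b.2).1)
                  - C (coePt m b.1 (pickIdx a b.1 (Finset.mem_erase.mp b.2).1))) ^ k))
          else 0) := by
  show MvPolynomial.eval (coePt m a) (pderivMulti (fun i => (e' i : ℕ)) (PInt m k n a e)) = _
  rw [eval_pderivMulti_eq_coeff_trans, trans_PInt]
  congr 1
  rw [MvPolynomial.coeff_monomial_mul']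
  show (if uexp e ≤ uexp e' then 1 * _ else 0) = _
  rw [one_mul]
  rfl

lemma uexp_apply {n k : ℕ} (e : Fin n → Fin k) (i : Fin n) : uexp e i = (e i : ℕ) := rfl

lemma uexp_inj {n k : ℕ} {e e' : Fin n → Fin k} (h : uexp e = uexp e') : e = e' := by
  funext i
  have := congrFun (congrArg (fun u : Fin n →₀ ℕ => (u : Fin n → ℕ)) h) i
  exact Fin.ext this

lemma single_mem_range (m k n : ℕ) :
    ∀ t : ℕ, ∀ idx : Idx m k n, k - (∑ i, (idx.1.2 i : ℕ)) ≤ t →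
      Pi.single idx (1:ℝ) ∈ LinearMap.range (Lmap m k n) := by
  intro t
  induction t with
  | zero =>
    intro idx hidx
    exfalso
    have h1 := idx.2
    have h2 : (∑ i, (idx.1.2 i : ℕ)) < k := by
      rcases eq_or_ne idx.1.1 0 with h | h
      · rw [if_pos h] at h1; omega
      · rw [if_neg h] at h1; omega
    omega
  | succ t ih =>
    intro idx hidx
    classical
    obtain ⟨⟨a, e⟩, hp⟩ := idx
    set idx : Idx m k n := ⟨(a, e), hp⟩ with hidxdef
    set v : Idx m k n → ℝ := Lmap m k n (PInt m k n a e) with hvdef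
    have hvmem : v ∈ LinearMap.range (Lmap m k n) := ⟨_, rfl⟩
    -- the diagonal entry is nonzero
    have hdiag : v idx ≠ 0 := by
      rw [hvdef]
      show Lmap m k n (PInt m k n a e) ⟨(a, e), hp⟩ ≠ 0
      rw [Lmap_PInt a e e hp, if_pos le_rfl]
      have h1 : uexp e - uexp e = 0 := tsub_self _
      rw [h1, coeff_zero_trans]
      apply mul_ne_zero
      · positivity
      · exact eval_PInt_U_ne a
    -- off-diagonal entries vanish or have larger derivative order
    have hoff : ∀ idx' : Idx m k n, idx' ≠ idx → v idx' ≠ 0 →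
        (∑ i, (e i : ℕ)) < ∑ i, (idx'.1.2 i : ℕ) := by
      intro idx' hne hv0
      obtain ⟨⟨a', e'⟩, hp'⟩ := idx'
      rcases eq_or_ne a' a with rfl | ha'
      · have he' : e' ≠ e := by
          intro h
          subst h
          exact hne rfl
        have hval := Lmap_PInt a' e e' hp'
        rw [hvdef] at hv0
        rw [hval] at hv0
        have hle : uexp e ≤ uexp e' := by
          by_contra hcon
          rw [if_neg hcon, mul_zero] at hv0
          exact hv0 rfl
        show (∑ i, (e i : ℕ)) < ∑ i, (e' i : ℕ)
        have hlee : ∀ i, (e i : ℕ) ≤ (e' i : ℕ) := fun i => by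
          have := hle i
          rwa [uexp_apply, uexp_apply] at this
        obtain ⟨i₀, hi₀⟩ : ∃ i₀, (e i₀ : ℕ) ≠ (e' i₀ : ℕ) := by
          by_contra hcon
          push_neg at hcon
          exact he' (funext fun i => Fin.ext (hcon i).symm)
        exact Finset.sum_lt_sum (fun i _ => hlee i)
          ⟨i₀, Finset.mem_univ i₀, lt_of_le_of_ne (hlee i₀) hi₀⟩
      · exfalso
        apply hv0
        rw [hvdef]
        show MvPolynomial.eval (coePt m a') (pderivMulti (fun i => (e' i : ℕ))
          (PInt m k n a e)) = 0
        apply vo_PInt_other a a' e ha'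
        have hp'' : ∑ i, ((e' i : ℕ)) < if a' = 0 then k - 1 else k := hp'
        rcases eq_or_ne a' 0 with h | h
        · rw [if_pos h] at hp''; omega
        · rw [if_neg h] at hp''; exact hp''
    set rest : Idx m k n → ℝ :=
      ∑ idx' ∈ Finset.univ.erase idx, v idx' • (Pi.single idx' (1:ℝ) : Idx m k n → ℝ)
      with hrestdef
    have hrest : rest ∈ LinearMap.range (Lmap m k n) := by
      rw [hrestdef]
      apply Submodule.sum_mem
      intro idx' hidx'
      have hne : idx' ≠ idx := Finset.ne_of_mem_erase hidx'
      rcases eq_or_ne (v idx') 0 with h | h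
      · rw [h, zero_smul]; exact Submodule.zero_mem _
      · apply Submodule.smul_mem
        apply ih
        have h1 := hoff idx' hne h
        have h2 : k - ∑ i, (e i : ℕ) ≤ t + 1 := hidx
        show k - ∑ i, (idx'.1.2 i : ℕ) ≤ t
        omega
    have hsingle : ∀ (y : Idx m k n → ℝ) (j : Idx m k n),
        (Pi.single j (y j) : Idx m k n → ℝ) = y j • (Pi.single j (1:ℝ) : Idx m k n → ℝ) := by
      intro y j
      funext z
      rcases eq_or_ne z j with rfl | hz
      · simp
      · simp [Pi.single_eq_of_ne hz]
    have hdecomp : v = v idx • (Pi.single idx (1:ℝ) : Idx m k n → ℝ) + rest := by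
      conv_lhs => rw [← Finset.univ_sum_single v]
      rw [← Finset.add_sum_erase Finset.univ _ (Finset.mem_univ idx), hsingle v idx, hrestdef]
      congr 1
      exact Finset.sum_congr rfl fun j _ => hsingle v j
    obtain ⟨c, hc⟩ : ∃ c, v idx = c := ⟨_, rfl⟩
    rw [hc] at hdiag hdecomp
    have hfinal : (Pi.single idx (1:ℝ) : Idx m k n → ℝ) = c⁻¹ • (v - rest) := by
      rw [hdecomp, add_sub_cancel_right, smul_smul, inv_mul_cancel₀ hdiag, one_smul]
    rw [hfinal]
    exact Submodule.smul_mem _ _ (Submodule.sub_mem _ hvmem hrest)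

lemma Lmap_surjective (m k n : ℕ) : Function.Surjective (Lmap m k n) := by
  rw [← LinearMap.range_eq_top]
  rw [eq_top_iff]
  intro y _
  have hy : y = ∑ idx, (Pi.single idx (y idx) : Idx m k n → ℝ) := (Finset.univ_sum_single y).symm
  rw [hy]
  apply Submodule.sum_mem
  intro idx _
  have h1 : (Pi.single idx (y idx) : Idx m k n → ℝ)
      = y idx • (Pi.single idx (1:ℝ) : Idx m k n → ℝ) := by
    funext z
    rcases eq_or_ne z idx with rfl | hz
    · simp
    · simp [Pi.single_eq_of_ne hz]
  rw [h1]
  exact Submodule.smul_mem _ _ (single_mem_range m k n k idx (by omega))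

/-! ### dimension count and uniqueness -/

/-- the reduced exponent associated to a condition index -/
noncomputable def expOf (m k : ℕ) {n : ℕ} (a : Fin n → Fin (m+1)) (e : Fin n → Fin k) :
    Fin n →₀ ℕ :=
  Finsupp.equivFunOnFinite.symm (fun i => (e i : ℕ) * (m + 1) + (m - (a i : ℕ)))

lemma expOf_apply (m k : ℕ) {n : ℕ} (a : Fin n → Fin (m+1)) (e : Fin n → Fin k) (i : Fin n) :
    expOf m k a e i = (e i : ℕ) * (m + 1) + (m - (a i : ℕ)) := rfl

lemma euclid_unique {m x y r s : ℕ} (hr : r < m + 1) (hs : s < m + 1)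
    (h : x * (m + 1) + r = y * (m + 1) + s) : x = y ∧ r = s := by
  have h1 : (x * (m + 1) + r) % (m + 1) = r := by
    rw [Nat.mul_add_mod', Nat.mod_eq_of_lt hr]
  have h2 : (y * (m + 1) + s) % (m + 1) = s := by
    rw [Nat.mul_add_mod', Nat.mod_eq_of_lt hs]
  have hrs : r = s := by rw [← h1, ← h2, h]
  subst hrs
  have h3 : x * (m + 1) = y * (m + 1) := by omega
  exact ⟨Nat.eq_of_mul_eq_mul_right (by omega) h3, rfl⟩

lemma expOf_inj (m k n : ℕ) :
    Function.Injective (fun idx : Idx m k n => expOf m k idx.1.1 idx.1.2) := by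
  intro idx idx' h
  obtain ⟨⟨a, e⟩, hp⟩ := idx
  obtain ⟨⟨a', e'⟩, hp'⟩ := idx'
  simp only at h
  have hcomp : ∀ i, (e i : ℕ) * (m + 1) + (m - (a i : ℕ))
      = (e' i : ℕ) * (m + 1) + (m - (a' i : ℕ)) := by
    intro i
    have := congrFun (congrArg (fun u : Fin n →₀ ℕ => (u : Fin n → ℕ)) h) i
    exact this
  have key : ∀ i, (e i : ℕ) = (e' i : ℕ) ∧ (m - (a i : ℕ)) = (m - (a' i : ℕ)) := by
    intro i
    exact euclid_unique (by have := (a i).is_le; omega) (by have := (a' i).is_le; omega)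
      (hcomp i)
  apply Subtype.ext
  show (a, e) = (a', e')
  have ha : a = a' := funext fun i => Fin.ext (by
    have h1 := (key i).2
    have h2 := (a i).is_le
    have h3 := (a' i).is_le
    omega)
  have he : e = e' := funext fun i => Fin.ext (key i).1
  rw [ha, he]

/-- family of reduced monomials indexed by the conditions -/
noncomputable def phiFam (m k n : ℕ) : Idx m k n → MvPolynomial (Fin n) ℝ :=
  fun idx => monomial (expOf m k idx.1.1 idx.1.2) 1

lemma phiFam_linearIndependent (m k n : ℕ) : LinearIndependent ℝ (phiFam m k n) := by
  have hb := (MvPolynomial.basisMonomials (Fin n) ℝ).linearIndependent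
  have := hb.comp _ (expOf_inj m k n)
  have heq : phiFam m k n
      = (MvPolynomial.basisMonomials (Fin n) ℝ) ∘ (fun idx : Idx m k n =>
          expOf m k idx.1.1 idx.1.2) := by
    funext idx
    show phiFam m k n idx = MvPolynomial.basisMonomials (Fin n) ℝ _
    rw [show ⇑(MvPolynomial.basisMonomials (Fin n) ℝ) = fun s => monomial s 1 from
      MvPolynomial.coe_basisMonomials (Fin n) ℝ]
    rfl
  rw [heq]
  exact this

/-- reduced polynomials lie in the span of the family -/
lemma mem_span_of_good {m k n : ℕ} (hm : 1 ≤ m) (hk : 2 ≤ k) (hn : 1 ≤ n)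
    {P₀ : MvPolynomial (Fin n) ℝ} (hgood : ∀ d ∈ P₀.support, Good m k d) :
    P₀ ∈ Submodule.span ℝ (Set.range (phiFam m k n)) := by
  rw [← MvPolynomial.support_sum_monomial_coeff P₀]
  apply Submodule.sum_mem
  intro d hd
  have hGd := hgood d hd
  have hsmul : monomial d (coeff d P₀) = coeff d P₀ • monomial d (1:ℝ) := by
    rw [MvPolynomial.smul_monomial, smul_eq_mul, mul_one]
  rw [hsmul]
  apply Submodule.smul_mem
  apply Submodule.subset_span
  -- construct the index
  have hqsum : ∑ i, d i / (m + 1) ≤ k - 1 := by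
    have h := (exists_f_iff m k d).not.mp hGd.1
    omega
  have hqlt : ∀ i, d i / (m + 1) < k := fun i => by
    have h1 : d i / (m+1) ≤ ∑ i, d i / (m + 1) :=
      Finset.single_le_sum (f := fun j => d j / (m + 1)) (fun _ _ => Nat.zero_le _)
        (Finset.mem_univ i)
    omega
  have hrlt : ∀ i, d i % (m + 1) ≤ m := fun i => by
    have := Nat.mod_lt (d i) (show 0 < m + 1 by omega)
    omega
  set e : Fin n → Fin k := fun i => ⟨d i / (m + 1), hqlt i⟩ with hedef
  set a : Fin n → Fin (m+1) := fun i => ⟨m - d i % (m + 1), by omega⟩ with hadef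
  have hexp : expOf m k a e = d := by
    ext i
    rw [expOf_apply]
    show (d i / (m+1)) * (m + 1) + (m - (m - d i % (m + 1))) = d i
    have h1 := Nat.div_add_mod (d i) (m + 1)
    have h2 := hrlt i
    have h3 : (d i / (m+1)) * (m+1) = (m+1) * (d i / (m+1)) := mul_comm _ _
    omega
  have hidx : (∑ i, (e i : ℕ)) < (if a = 0 then k - 1 else k) := by
    have hesum : (∑ i, (e i : ℕ)) = ∑ i, d i / (m + 1) := rfl
    rcases eq_or_ne a 0 with ha | ha
    · rw [if_pos ha]
      -- all residues are m; the borderline case is excluded by the degree bound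
      have hrm : ∀ i, d i % (m + 1) = m := fun i => by
        have := congrFun (congrArg (fun f : Fin n → Fin (m+1) => fun j => (f j : ℕ)) ha) i
        have h2 : (a i : ℕ) = m - d i % (m + 1) := rfl
        have h3 := hrlt i
        have h4 : ((0 : Fin n → Fin (m+1)) i : ℕ) = 0 := rfl
        omega
      have hdeg := hGd.2
      have hsplit : edeg d = (m + 1) * (∑ i, d i / (m + 1)) + ∑ i, d i % (m + 1) := by
        unfold edeg
        rw [Finset.mul_sum, ← Finset.sum_add_distrib]
        exact Finset.sum_congr rfl fun i _ => (Nat.div_add_mod (d i) (m+1)).symm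
      have hrsum : ∑ i, d i % (m + 1) = n * m := by
        rw [show (∑ i, d i % (m+1)) = ∑ _i : Fin n, m from Finset.sum_congr rfl fun i _ => hrm i]
        rw [Finset.sum_const, Finset.card_univ, Fintype.card_fin, smul_eq_mul]
      have hcomm : m * n = n * m := mul_comm m n
      -- if ∑ q = k - 1 then edeg d = mn + (m+1)(k-1) > bound
      have hq2 : ∑ i, d i / (m + 1) ≤ k - 2 := by
        by_contra hcon
        push_neg at hcon
        have hq1 : ∑ i, d i / (m + 1) = k - 1 := by omega
        rw [hq1, hrsum] at hsplit
        have h5 : 1 * 1 ≤ m * n := Nat.mul_le_mul hm hn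
        omega
      rw [hesum]
      omega
    · rw [if_neg ha, hesum]
      omega
  exact ⟨⟨(a, e), hidx⟩, by show monomial (expOf m k a e) 1 = _; rw [hexp]⟩

lemma unique_of_good {m k n : ℕ} (hm : 1 ≤ m) (hk : 2 ≤ k) (hn : 1 ≤ n)
    {P₀ P₁ : MvPolynomial (Fin n) ℝ} (h0 : ∀ d ∈ P₀.support, Good m k d)
    (h1 : ∀ d ∈ P₁.support, Good m k d) (hL : Lmap m k n P₀ = Lmap m k n P₁) :
    P₀ = P₁ := by
  classical
  set V : Submodule ℝ (MvPolynomial (Fin n) ℝ) :=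
    Submodule.span ℝ (Set.range (phiFam m k n)) with hVdef
  haveI : FiniteDimensional ℝ V :=
    FiniteDimensional.span_of_finite ℝ (Set.finite_range (phiFam m k n))
  set Lres : V →ₗ[ℝ] (Idx m k n → ℝ) := (Lmap m k n).comp V.subtype with hLresdef
  have hsurj : Function.Surjective Lres := by
    intro y
    obtain ⟨P, hP⟩ := Lmap_surjective m k n y
    obtain ⟨P₀', hgood', _, hgc'⟩ := reduction m k hm hk hn P.totalDegree P le_rfl
    have hmem : P₀' ∈ V := mem_span_of_good hm hk hn hgood'
    refine ⟨⟨P₀', hmem⟩, ?_⟩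
    have hz := (gridCond_iff_Lmap (m := m) (k := k) (n := n) (P - P₀')).mp hgc'
    rw [map_sub] at hz
    have : Lmap m k n P₀' = Lmap m k n P := by
      rw [← sub_eq_zero]
      rw [← neg_sub (Lmap m k n P) (Lmap m k n P₀')]
      rw [hz]
      simp
    show Lmap m k n P₀' = y
    rw [this, hP]
  have hfr : Module.finrank ℝ V = Module.finrank ℝ (Idx m k n → ℝ) := by
    rw [hVdef, finrank_span_eq_card (phiFam_linearIndependent m k n)]
    rw [Module.finrank_fintype_fun_eq_card]
  have hinj : Function.Injective Lres :=
    (LinearMap.injective_iff_surjective_of_finrank_eq_finrank hfr).mpr hsurj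
  have hmem0 : P₀ ∈ V := mem_span_of_good hm hk hn h0
  have hmem1 : P₁ ∈ V := mem_span_of_good hm hk hn h1
  have : (⟨P₀, hmem0⟩ : V) = ⟨P₁, hmem1⟩ := by
    apply hinj
    show Lmap m k n P₀ = Lmap m k n P₁
    exact hL
  exact congrArg Subtype.val this

lemma good_of_reduced {m k n : ℕ} {P₀ : MvPolynomial (Fin n) ℝ}
    (h : IsMKReduced m k n P₀) : ∀ d ∈ P₀.support, Good m k d := by
  intro d hd
  refine ⟨h.2 d hd, ?_⟩
  have h1 := MvPolynomial.le_totalDegree hd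
  rw [edeg_eq_sum] at h1
  exact le_trans h1 h.1

lemma reduced_of_good {m k n : ℕ} {P₀ : MvPolynomial (Fin n) ℝ}
    (h : ∀ d ∈ P₀.support, Good m k d) : IsMKReduced m k n P₀ :=
  ⟨good_totalDegree h, fun d hd => (h d hd).1⟩

end Stmt17

open Stmt17 in
/-- for every `P` there is a unique `(m,k)`-reduced `P₀` such that
`P - P₀` vanishes to order at least `k` at all points of `{0,…,m}^n \ {0}` and to
order at least `k-1` at the origin; moreover `deg P₀ ≤ deg P`. -/
theorem stmt17 (m k n : ℕ) (hm : 1 ≤ m) (hk : 2 ≤ k) (hn : 1 ≤ n)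
    (P : MvPolynomial (Fin n) ℝ) :
    (∃! P₀ : MvPolynomial (Fin n) ℝ, IsMKReduced m k n P₀ ∧
      (∀ x : Fin n → ℝ, (∀ i, ∃ j : ℕ, j ≤ m ∧ x i = (j : ℝ)) → x ≠ 0 →
        VanishesToOrder (P - P₀) x k) ∧
      VanishesToOrder (P - P₀) 0 (k - 1)) ∧
    (∀ P₀ : MvPolynomial (Fin n) ℝ, IsMKReduced m k n P₀ →
      (∀ x : Fin n → ℝ, (∀ i, ∃ j : ℕ, j ≤ m ∧ x i = (j : ℝ)) → x ≠ 0 →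
        VanishesToOrder (P - P₀) x k) →
      VanishesToOrder (P - P₀) 0 (k - 1) →
      P₀.totalDegree ≤ P.totalDegree) := by
  obtain ⟨P₀, hgood, hdeg, hgc⟩ := reduction m k hm hk hn P.totalDegree P le_rfl
  have huniq : ∀ Q : MvPolynomial (Fin n) ℝ, IsMKReduced m k n Q →
      (∀ x : Fin n → ℝ, (∀ i, ∃ j : ℕ, j ≤ m ∧ x i = (j : ℝ)) → x ≠ 0 →
        VanishesToOrder (P - Q) x k) →
      VanishesToOrder (P - Q) 0 (k - 1) → Q = P₀ := by
    intro Q hQ1 hQ2 hQ3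
    have hgcQ : GridCond m k (P - Q) := ⟨hQ2, hQ3⟩
    have hzQ := (gridCond_iff_Lmap (m := m) (k := k) (n := n) (P - Q)).mp hgcQ
    have hzP := (gridCond_iff_Lmap (m := m) (k := k) (n := n) (P - P₀)).mp hgc
    rw [map_sub] at hzQ hzP
    have hL : Lmap m k n Q = Lmap m k n P₀ := by
      have h1 : Lmap m k n Q = Lmap m k n P := by
        rw [← sub_eq_zero, ← neg_sub (Lmap m k n P) (Lmap m k n Q), hzQ]; simp
      have h2 : Lmap m k n P₀ = Lmap m k n P := by
        rw [← sub_eq_zero, ← neg_sub (Lmap m k n P) (Lmap m k n P₀), hzP]; simp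
      rw [h1, h2]
    exact unique_of_good hm hk hn (good_of_reduced hQ1) hgood hL
  constructor
  · exact ⟨P₀, ⟨reduced_of_good hgood, hgc.1, hgc.2⟩,
      fun Q hQ => huniq Q hQ.1 hQ.2.1 hQ.2.2⟩
  · intro Q hQ1 hQ2 hQ3
    rw [huniq Q hQ1 hQ2 hQ3]
    exact hdeg
end

section
/- Let m ≥ 1, k ≥ 2, n ≥ k−1, and let λ_1,…,λ_t be positive integers with λ_1+⋯+λ_t ≤ (m+1)(k−1)−1, such that exactly one λ_i is congruent to m modulo m+1 and all the others are divisible by m+1. Then the augmented monomial symmetric polynomial m_{λ_1,…,λ_t}(x_1,…,x_n) can be written as a linear combination of products p_{μ_1}(x)⋯p_{μ_s}(x) of power sums, where μ_1+⋯+μ_s = λ_1+⋯+λ_t, exactly one μ_j ≡ m (mod m+1), and all other μ_j are divisible by m+1; moreover this expression is unique. -/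
open MvPolynomial

/-- The power sum `p_d = x_1^d + ⋯ + x_n^d`. -/
noncomputable def psum (n d : ℕ) : MvPolynomial (Fin n) ℝ :=
  ∑ i, (X i : MvPolynomial (Fin n) ℝ) ^ d

/-- The augmented monomial symmetric polynomial
`m_{λ₁,…,λ_t}(x) = ∑_{i₁,…,i_t distinct} x_{i₁}^{λ₁} ⋯ x_{i_t}^{λ_t}`. -/
noncomputable def mSym (n t : ℕ) (lam : Fin t → ℕ) : MvPolynomial (Fin n) ℝ :=
  ∑ f ∈ Finset.univ.filter (fun f : Fin t → Fin n => Function.Injective f),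
    ∏ j, (X (f j) : MvPolynomial (Fin n) ℝ) ^ lam j

-- term identity for part 2
lemma term_update (n t : ℕ) (lam : Fin t → ℕ) (a : ℕ) (g : Fin t → Fin n) (j₀ : Fin t) :
    ∏ j, (X (g j) : MvPolynomial (Fin n) ℝ) ^ (Function.update lam j₀ (lam j₀ + a) j)
      = X (g j₀) ^ a * ∏ j, (X (g j) : MvPolynomial (Fin n) ℝ) ^ lam j := by
  have h : ∀ j, Function.update lam j₀ (lam j₀ + a) j = lam j + (if j = j₀ then a else 0) := by
    intro j
    rcases eq_or_ne j j₀ with rfl | hj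
    · simp [Function.update_self]
    · simp [Function.update_of_ne hj, hj]
  calc ∏ j, (X (g j) : MvPolynomial (Fin n) ℝ) ^ (Function.update lam j₀ (lam j₀ + a) j)
      = ∏ j, ((X (g j) : MvPolynomial (Fin n) ℝ) ^ lam j * (if j = j₀ then X (g j) ^ a else 1)) := by
        refine Finset.prod_congr rfl fun j _ => ?_
        rw [h j, pow_add]
        congr 1
        split <;> simp
    _ = (∏ j, (X (g j) : MvPolynomial (Fin n) ℝ) ^ lam j) * ∏ j, (if j = j₀ then (X (g j) : MvPolynomial (Fin n) ℝ) ^ a else 1) := Finset.prod_mul_distrib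
    _ = _ := by rw [Finset.prod_ite_eq' Finset.univ j₀ (fun j => (X (g j) : MvPolynomial (Fin n) ℝ) ^ a)]
                simp [mul_comm]

lemma snoc_inj {t n : ℕ} {g : Fin t → Fin n} (hg : Function.Injective g) {i : Fin n}
    (hi : ∀ j, g j ≠ i) : Function.Injective (Fin.snoc g i : Fin (t+1) → Fin n) := by
  intro x y hxy
  cases x using Fin.lastCases with
  | last =>
    cases y using Fin.lastCases with
    | last => rfl
    | cast j => rw [Fin.snoc_last, Fin.snoc_castSucc] at hxy; exact absurd hxy.symm (hi j)
  | cast j =>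
    cases y using Fin.lastCases with
    | last => rw [Fin.snoc_last, Fin.snoc_castSucc] at hxy; exact absurd hxy (hi j)
    | cast j' =>
      rw [Fin.snoc_castSucc, Fin.snoc_castSucc] at hxy
      exact congrArg Fin.castSucc (hg hxy)

lemma psum_mul_mSym (n t : ℕ) (lam : Fin t → ℕ) (a : ℕ) :
    psum n a * mSym n t lam
      = mSym n (t+1) (Fin.snoc lam a)
        + ∑ j₀ : Fin t, mSym n t (Function.update lam j₀ (lam j₀ + a)) := by
  classical
  have expand : psum n a * mSym n t lam
      = ∑ g ∈ Finset.univ.filter (fun g : Fin t → Fin n => Function.Injective g),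
          ∑ i : Fin n, (X i : MvPolynomial (Fin n) ℝ) ^ a * ∏ j, (X (g j)) ^ lam j := by
    rw [mSym, Finset.mul_sum]
    refine Finset.sum_congr rfl fun g _ => ?_
    rw [_root_.psum, Finset.sum_mul]
  rw [expand]
  have split : ∀ g : Fin t → Fin n,
      (∑ i : Fin n, (X i : MvPolynomial (Fin n) ℝ) ^ a * ∏ j, (X (g j)) ^ lam j)
      = (∑ i ∈ Finset.univ.filter (fun i => i ∈ Finset.image g Finset.univ),
          (X i : MvPolynomial (Fin n) ℝ) ^ a * ∏ j, (X (g j)) ^ lam j)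
        + (∑ i ∈ Finset.univ.filter (fun i => ¬ i ∈ Finset.image g Finset.univ),
          (X i : MvPolynomial (Fin n) ℝ) ^ a * ∏ j, (X (g j)) ^ lam j) :=
    fun g => (Finset.sum_filter_add_sum_filter_not _ _ _).symm
  simp only [split, Finset.sum_add_distrib]
  rw [add_comm]
  congr 1
  · -- the "new index" part equals mSym (t+1) (snoc lam a)
    rw [mSym]
    refine (Finset.sum_sigma' _ _ _).trans ?_
    refine Finset.sum_nbij' (fun p => Fin.snoc p.1 p.2)
      (fun f => ⟨Fin.init f, f (Fin.last t)⟩) ?_ ?_ ?_ ?_ ?_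
    · rintro ⟨g, i⟩ hp
      simp only [Finset.mem_sigma, Finset.mem_filter, Finset.mem_univ, true_and,
        Finset.mem_image, not_exists] at hp
      simp only [Finset.mem_filter, Finset.mem_univ, true_and]
      exact snoc_inj hp.1 (fun j h => hp.2 j h)
    · intro f hf
      simp only [Finset.mem_filter, Finset.mem_univ, true_and] at hf
      simp only [Finset.mem_sigma, Finset.mem_filter, Finset.mem_univ, true_and,
        Finset.mem_image, not_exists]
      constructor
      · intro x y hxy
        have := hf (show f x.castSucc = f y.castSucc from hxy)
        exact Fin.castSucc_injective t this
      · intro j h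
        have := hf (show f j.castSucc = f (Fin.last t) from h)
        exact absurd this (Fin.castSucc_lt_last j).ne
    · rintro ⟨g, i⟩ _
      simp [Fin.init_snoc, Fin.snoc_last]
    · intro f _
      exact Fin.snoc_init_self f
    · rintro ⟨g, i⟩ _
      rw [Fin.prod_univ_castSucc]
      simp only [Fin.snoc_castSucc, Fin.snoc_last]
      rw [mul_comm]
  · -- the "merge" part
    calc ∑ g ∈ Finset.univ.filter (fun g : Fin t → Fin n => Function.Injective g),
          ∑ i ∈ Finset.univ.filter (fun i => i ∈ Finset.image g Finset.univ),
            (X i : MvPolynomial (Fin n) ℝ) ^ a * ∏ j, (X (g j)) ^ lam j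
        = ∑ g ∈ Finset.univ.filter (fun g : Fin t → Fin n => Function.Injective g),
          ∑ j₀ : Fin t, (X (g j₀) : MvPolynomial (Fin n) ℝ) ^ a * ∏ j, (X (g j)) ^ lam j := by
          refine Finset.sum_congr rfl fun g hg => ?_
          simp only [Finset.mem_filter, Finset.mem_univ, true_and] at hg
          have hfil : Finset.univ.filter (fun i => i ∈ Finset.image g Finset.univ)
              = Finset.image g Finset.univ := by ext i; simp
          rw [hfil, Finset.sum_image (fun x _ y _ h => hg h)]
      _ = ∑ j₀ : Fin t, ∑ g ∈ Finset.univ.filter (fun g : Fin t → Fin n => Function.Injective g),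
            (X (g j₀) : MvPolynomial (Fin n) ℝ) ^ a * ∏ j, (X (g j)) ^ lam j := Finset.sum_comm
      _ = _ := by
          refine Finset.sum_congr rfl fun j₀ _ => ?_
          rw [mSym]
          exact Finset.sum_congr rfl fun g _ => (term_update n t lam a g j₀).symm

lemma mSym_one (n : ℕ) (lam : Fin 1 → ℕ) : mSym n 1 lam = psum n (lam 0) := by
  classical
  rw [mSym]
  have hfil : (Finset.univ.filter (fun f : Fin 1 → Fin n => Function.Injective f))
      = Finset.univ := by
    ext f
    simpa using (show Function.Injective f from fun a b _ => Subsingleton.elim a b)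
  rw [hfil, _root_.psum]
  refine Fintype.sum_equiv (Equiv.funUnique (Fin 1) (Fin n)) _ _ fun f => ?_
  simp [Equiv.funUnique]

lemma mSym_perm (n t : ℕ) (lam : Fin t → ℕ) (σ : Equiv.Perm (Fin t)) :
    mSym n t (lam ∘ σ) = mSym n t lam := by
  classical
  rw [mSym, mSym]
  refine Finset.sum_nbij' (fun f => f ∘ σ.symm) (fun f => f ∘ σ) ?_ ?_ ?_ ?_ ?_
  · intro f hf
    simp only [Finset.mem_filter, Finset.mem_univ, true_and] at hf ⊢
    exact hf.comp σ.symm.injective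
  · intro f hf
    simp only [Finset.mem_filter, Finset.mem_univ, true_and] at hf ⊢
    exact hf.comp σ.injective
  · intro f _; ext j; simp
  · intro f _; ext j; simp
  · intro f _
    exact Fintype.prod_equiv σ (fun j => (X (f j) : MvPolynomial (Fin n) ℝ) ^ lam (σ j))
      (fun j => (X ((f ∘ σ.symm) j) : MvPolynomial (Fin n) ℝ) ^ lam j) fun j => by simp

lemma mSym_zero (n : ℕ) (lam : Fin 0 → ℕ) : mSym n 0 lam = 1 := by
  classical
  rw [mSym]
  have hfil : (Finset.univ.filter (fun f : Fin 0 → Fin n => Function.Injective f))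
      = Finset.univ := by
    ext f; simp [Function.Injective]
  rw [hfil]
  simp [Finset.sum_const, Finset.card_univ]

noncomputable section Indep

open Finset

def wgt {s n : ℕ} (l : Fin s → ℕ) (g : Fin s → Fin n) : Fin n →₀ ℕ :=
  ∑ j, Finsupp.single (g j) (l j)

lemma prodXpow {s n : ℕ} (l : Fin s → ℕ) (g : Fin s → Fin n) :
    ∏ j, (X (g j) : MvPolynomial (Fin n) ℝ) ^ l j = monomial (wgt l g) 1 := by
  rw [wgt, monomial_sum_one]
  exact Finset.prod_congr rfl fun j _ => X_pow_eq_monomial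

lemma coeff_prod_psum {s n : ℕ} (l : Fin s → ℕ) (α : Fin n →₀ ℕ) :
    coeff α (∏ j, psum n (l j))
      = ((univ.filter fun g : Fin s → Fin n => wgt l g = α).card : ℝ) := by
  classical
  have : ∏ j, psum n (l j) = ∑ g : Fin s → Fin n, monomial (wgt l g) 1 := by
    have h1 : ∀ j : Fin s, _root_.psum n (l j) = ∑ i ∈ univ, (X i : MvPolynomial (Fin n) ℝ) ^ l j :=
      fun j => rfl
    simp only [h1]
    rw [Finset.prod_univ_sum, Fintype.piFinset_univ]
    exact Finset.sum_congr rfl fun g _ => prodXpow l g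
  rw [this, MvPolynomial.coeff_sum]
  simp only [coeff_monomial]
  rw [Finset.sum_boole]

lemma wgt_apply {s n : ℕ} (l : Fin s → ℕ) {g : Fin s → Fin n} (hg : Function.Injective g)
    (j₀ : Fin s) : wgt l g (g j₀) = l j₀ := by
  classical
  rw [wgt, Finsupp.finset_sum_apply]
  rw [Finset.sum_congr rfl (fun j _ => ?_), Finset.sum_ite_eq' univ j₀ l]
  · simp
  · rw [Finsupp.single_apply]
    exact if_congr hg.eq_iff rfl rfl

lemma wgt_support {s n : ℕ} {l : Fin s → ℕ} {g : Fin s → Fin n} (hg : Function.Injective g)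
    (hl : ∀ j, 0 < l j) : (wgt l g).support = Finset.image g univ := by
  classical
  apply Finset.Subset.antisymm
  · refine (Finsupp.support_finset_sum).trans ?_
    intro i hi
    simp only [Finset.mem_biUnion] at hi
    obtain ⟨j, -, hj⟩ := hi
    have := Finsupp.support_single_subset hj
    simp only [Finset.mem_singleton] at this
    subst this
    exact Finset.mem_image_of_mem g (mem_univ j)
  · intro i hi
    simp only [Finset.mem_image] at hi
    obtain ⟨j, -, rfl⟩ := hi
    rw [Finsupp.mem_support_iff, wgt_apply l hg]
    exact (hl j).ne'

lemma wgt_multiset {s n : ℕ} {l : Fin s → ℕ} {g : Fin s → Fin n} (hg : Function.Injective g)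
    (hl : ∀ j, 0 < l j) :
    Multiset.map (wgt l g) (wgt l g).support.val = (↑(List.ofFn l) : Multiset ℕ) := by
  classical
  rw [wgt_support hg hl, Finset.image_val_of_injOn (hg.injOn), Multiset.map_map,
    ← Fin.univ_val_map]
  exact Multiset.map_congr rfl fun j _ => wgt_apply l hg j

lemma coeff_psum_prod_ne {s s' n : ℕ} (l : Fin s → ℕ) (l' : Fin s' → ℕ)
    (hl : ∀ j, 0 < l j) (hl' : ∀ j, 0 < l' j) {g₀ : Fin s → Fin n}
    (hg₀ : Function.Injective g₀) (hss : s' ≤ s)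
    (hne : (↑(List.ofFn l') : Multiset ℕ) ≠ (↑(List.ofFn l) : Multiset ℕ)) :
    coeff (wgt l g₀) (∏ j, psum n (l' j)) = 0 := by
  classical
  rw [coeff_prod_psum]
  norm_cast
  rw [Finset.card_eq_zero, Finset.eq_empty_iff_forall_notMem]
  intro g hg
  simp only [Finset.mem_filter, mem_univ, true_and] at hg
  -- support considerations
  have hsupp : (wgt l g₀).support = Finset.image g₀ univ := wgt_support hg₀ hl
  have hcard : (wgt l g₀).support.card = s := by
    rw [hsupp, Finset.card_image_of_injective _ hg₀, Finset.card_univ, Fintype.card_fin]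
  have hsub : (wgt l' g).support ⊆ Finset.image g univ := by
    refine (Finsupp.support_finset_sum).trans ?_
    intro i hi
    simp only [Finset.mem_biUnion] at hi
    obtain ⟨j, -, hj⟩ := hi
    have := Finsupp.support_single_subset hj
    simp only [Finset.mem_singleton] at this
    subst this
    exact Finset.mem_image_of_mem g (mem_univ j)
  have hle : s ≤ (Finset.image g univ).card := by
    rw [← hcard, ← hg]
    exact Finset.card_le_card hsub
  have hle2 : (Finset.image g univ).card ≤ s' := by
    refine (Finset.card_image_le).trans ?_
    simp
  have hinj : Function.Injective g := by
    have hcardim : (Finset.image g univ).card = (univ : Finset (Fin s')).card := by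
      have : (univ : Finset (Fin s')).card = s' := by simp
      omega
    have := Finset.card_image_iff.mp hcardim
    rw [Finset.coe_univ] at this
    exact Set.injOn_univ.mp this
  -- derive multiset equality
  have h1 : Multiset.map (wgt l' g) (wgt l' g).support.val = (↑(List.ofFn l') : Multiset ℕ) :=
    wgt_multiset hinj hl'
  have h2 : Multiset.map (wgt l g₀) (wgt l g₀).support.val = (↑(List.ofFn l) : Multiset ℕ) :=
    wgt_multiset hg₀ hl
  rw [hg] at h1
  exact hne (h2.symm.trans h1).symm

lemma coeff_psum_prod_self {s n : ℕ} (l : Fin s → ℕ) {g₀ : Fin s → Fin n}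
    (hg₀ : Function.Injective g₀) :
    0 < coeff (wgt l g₀) (∏ j, psum n (l j)) := by
  classical
  rw [coeff_prod_psum]
  have : g₀ ∈ univ.filter fun g : Fin s → Fin n => wgt l g = wgt l g₀ := by
    simp
  have hpos : 0 < (univ.filter fun g : Fin s → Fin n => wgt l g = wgt l g₀).card :=
    Finset.card_pos.mpr ⟨g₀, this⟩
  exact_mod_cast hpos

lemma multiset_prod_eq (μ : Multiset ℕ) (n : ℕ) :
    (μ.map (psum n)).prod = ∏ j : Fin μ.toList.length, psum n (μ.toList.get j) := by
  conv_lhs => rw [← Multiset.coe_toList μ]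
  rw [Multiset.map_coe, Multiset.prod_coe]
  conv_lhs => rw [← List.ofFn_get μ.toList]
  rw [List.map_ofFn, List.prod_ofFn]
  rfl

lemma ofFn_get_eq (μ : Multiset ℕ) : (↑(List.ofFn μ.toList.get) : Multiset ℕ) = μ := by
  rw [List.ofFn_get, Multiset.coe_toList]

lemma indep {n : ℕ} (c : Multiset ℕ →₀ ℝ)
    (hc : ∀ μ ∈ c.support, (∀ b ∈ μ, 0 < b) ∧ Multiset.card μ ≤ n)
    (h0 : (c.sum fun μ coef => coef • (μ.map (psum n)).prod) = 0) : c = 0 := by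
  classical
  by_contra hne
  obtain ⟨μm, hμm, hmax⟩ := Finset.exists_max_image c.support Multiset.card
    (Finsupp.support_nonempty_iff.mpr hne)
  have hlpos : ∀ j, 0 < μm.toList.get j := fun j =>
    (hc μm hμm).1 _ (Multiset.mem_toList.mp (μm.toList.get_mem _))
  have hsn : μm.toList.length ≤ n := by
    rw [Multiset.length_toList]; exact (hc μm hμm).2
  set g₀ : Fin μm.toList.length → Fin n := Fin.castLE hsn with hg₀def
  have hg₀ : Function.Injective g₀ := Fin.castLE_injective hsn
  set α := wgt μm.toList.get g₀ with hα
  have h0c := congrArg (coeff α) h0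
  rw [Finsupp.sum, MvPolynomial.coeff_sum, coeff_zero] at h0c
  simp only [MvPolynomial.coeff_smul] at h0c
  rw [Finset.sum_eq_single μm ?side ?notmem] at h0c
  case side =>
    intro μ hμ hμne
    rw [multiset_prod_eq μ n, coeff_psum_prod_ne μm.toList.get μ.toList.get hlpos
      (fun j => (hc μ hμ).1 _ (Multiset.mem_toList.mp (μ.toList.get_mem _)))
      hg₀
      (by rw [Multiset.length_toList, Multiset.length_toList]; exact hmax μ hμ)
      (by rw [ofFn_get_eq, ofFn_get_eq]; exact hμne), smul_eq_zero]
    right; rfl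
  case notmem =>
    intro h
    exact absurd hμm h
  rw [multiset_prod_eq μm n] at h0c
  have hpos := coeff_psum_prod_self μm.toList.get hg₀
  have : c μm = 0 := by
    rcases smul_eq_zero.mp h0c with h | h
    · exact h
    · rw [← hα, h] at hpos; exact absurd hpos (lt_irrefl 0)
  exact (Finsupp.mem_support_iff.mp hμm) this

def Good (m S : ℕ) (μ : Multiset ℕ) : Prop :=
  (∀ b ∈ μ, 0 < b) ∧ μ.sum = S ∧
    ∃ a ν, μ = a ::ₘ ν ∧ a % (m + 1) = m ∧ ∀ b ∈ ν, (m + 1) ∣ b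

lemma exists_expansion (m n : ℕ) : ∀ t (lam : Fin t → ℕ),
    (∀ j, 0 < lam j) →
    (∃ i₀ : Fin t, lam i₀ % (m + 1) = m ∧ ∀ i, i ≠ i₀ → (m + 1) ∣ lam i) →
    ∃ c : Multiset ℕ →₀ ℝ,
      (∀ μ ∈ c.support, Good m (∑ j, lam j) μ) ∧
      mSym n t lam = (Finsupp.linearCombination ℝ
        (fun μ : Multiset ℕ => (μ.map (psum n)).prod)) c := by
  classical
  intro t
  induction t using Nat.strong_induction_on with
  | _ t IH =>
  match t with
  | 0 => rintro lam _ ⟨i₀, -, -⟩; exact i₀.elim0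
  | 1 =>
    rintro lam hpos ⟨i₀, hi₀, -⟩
    refine ⟨Finsupp.single {lam 0} 1, ?_, ?_⟩
    · intro μ hμ
      rw [Finsupp.support_single_ne_zero _ one_ne_zero, Finset.mem_singleton] at hμ
      subst hμ
      refine ⟨?_, ?_, lam 0, 0, by simp, ?_, by simp⟩
      · intro b hb
        rw [Multiset.mem_singleton] at hb
        exact hb ▸ hpos 0
      · simp
      · have : i₀ = 0 := Subsingleton.elim _ _
        rw [← this]; exact hi₀
    · rw [mSym_one, Finsupp.linearCombination_apply, Finsupp.sum_single_index (by simp)]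
      simp
  | (t + 2) =>
    rintro lam hpos ⟨i₀, hi₀m, hi₀d⟩
    -- choose an index different from i₀ to split off
    have h01 : (0 : Fin (t + 2)) ≠ 1 := by
      intro h
      have := congrArg Fin.val h
      simp [Fin.val_one] at this
    set jstar : Fin (t + 2) := if i₀ = 0 then 1 else 0 with hjdef
    have hjne : jstar ≠ i₀ := by
      rw [hjdef]; split
      · rename_i h; rw [h]; exact h01.symm
      · rename_i h; exact fun hh => h hh.symm
    set σ : Equiv.Perm (Fin (t + 2)) := Equiv.swap jstar (Fin.last (t + 1)) with hσdef
    set lam₂ : Fin (t + 2) → ℕ := lam ∘ σ with hlam₂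
    have hms : mSym n (t + 2) lam₂ = mSym n (t + 2) lam := mSym_perm n (t + 2) lam σ
    have hsum₂ : ∑ j, lam₂ j = ∑ j, lam j := Equiv.sum_comp σ lam
    have hσlast : σ (Fin.last (t + 1)) = jstar := Equiv.swap_apply_right _ _
    set i₁ : Fin (t + 2) := σ i₀ with hi₁def
    have hi₁lam : lam₂ i₁ = lam i₀ := by
      rw [hlam₂, hi₁def]
      simp [hσdef, Equiv.swap_apply_self]
    have hi₁ne : i₁ ≠ Fin.last (t + 1) := by
      rw [hi₁def, hσdef]
      by_cases h : i₀ = Fin.last (t + 1)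
      · rw [h, Equiv.swap_apply_right]
        rw [← h]; exact hjne
      · rw [Equiv.swap_apply_of_ne_of_ne (Ne.symm hjne) h]; exact h
    have hdvd₂ : ∀ i, i ≠ i₁ → (m + 1) ∣ lam₂ i := by
      intro i hi
      refine hi₀d (σ i) fun h => hi ?_
      rw [hi₁def, ← h]
      simp [hσdef, Equiv.swap_apply_self]
    set a : ℕ := lam₂ (Fin.last (t + 1)) with hadef
    have hadvd : (m + 1) ∣ a := by
      rw [hadef, hlam₂]
      simp only [Function.comp_apply, hσlast]
      exact hi₀d jstar hjne
    have hapos : 0 < a := hpos _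
    set lam' : Fin (t + 1) → ℕ := Fin.init lam₂ with hlam'
    have hsnoc : Fin.snoc lam' a = lam₂ := Fin.snoc_init_self lam₂
    -- the special index of lam'
    obtain ⟨i₂, hi₂⟩ := Fin.exists_castSucc_eq.mpr hi₁ne
    have hlam'pos : ∀ j, 0 < lam' j := fun j => hpos _
    have hlam'i₂ : lam' i₂ % (m + 1) = m := by
      rw [hlam', Fin.init, hi₂, hi₁lam]; exact hi₀m
    have hlam'dvd : ∀ i, i ≠ i₂ → (m + 1) ∣ lam' i := by
      intro i hi
      refine hdvd₂ i.castSucc fun h => hi (Fin.castSucc_injective _ (by rw [h, hi₂]))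
    -- sum bookkeeping
    have hsum' : (∑ j, lam' j) + a = ∑ j, lam j := by
      have h2 : ∑ j, lam₂ j = (∑ j, lam' j) + a := by
        rw [← hsnoc, Fin.sum_univ_castSucc]
        simp only [Fin.snoc_castSucc, Fin.snoc_last]
      rw [← hsum₂, h2]
    -- IH for lam'
    obtain ⟨c₁, hc₁Good, hc₁Eq⟩ := IH (t + 1) (by omega) lam' hlam'pos
      ⟨i₂, hlam'i₂, hlam'dvd⟩
    -- IH for the merged tuples
    have Hmerge : ∀ j₀ : Fin (t + 1), ∃ c : Multiset ℕ →₀ ℝ,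
        (∀ μ ∈ c.support, Good m (∑ j, lam j) μ) ∧
        mSym n (t + 1) (Function.update lam' j₀ (lam' j₀ + a))
          = (Finsupp.linearCombination ℝ
            (fun μ : Multiset ℕ => (μ.map (psum n)).prod)) c := by
      intro j₀
      set lam'' := Function.update lam' j₀ (lam' j₀ + a) with hlam''
      have hpos'' : ∀ j, 0 < lam'' j := by
        intro j
        rw [hlam'']
        rcases eq_or_ne j j₀ with rfl | h
        · rw [Function.update_self]; omega
        · rw [Function.update_of_ne h]; exact hlam'pos j
      have hcong'' : ∃ i₀' : Fin (t + 1), lam'' i₀' % (m + 1) = m ∧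
          ∀ i, i ≠ i₀' → (m + 1) ∣ lam'' i := by
        refine ⟨i₂, ?_, ?_⟩
        · rcases eq_or_ne j₀ i₂ with rfl | h
          · rw [hlam'', Function.update_self]
            obtain ⟨q, hq⟩ := hadvd
            rw [hq, Nat.add_mul_mod_self_left]
            exact hlam'i₂
          · rw [hlam'', Function.update_of_ne (Ne.symm h)]
            exact hlam'i₂
        · intro i hi
          rcases eq_or_ne i j₀ with rfl | h
          · rw [hlam'', Function.update_self]
            exact dvd_add (hlam'dvd i hi) hadvd
          · rw [hlam'', Function.update_of_ne h]
            exact hlam'dvd i hi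
      obtain ⟨c, hG, hE⟩ := IH (t + 1) (by omega) lam'' hpos'' hcong''
      refine ⟨c, ?_, hE⟩
      have hsum'' : ∑ j, lam'' j = ∑ j, lam j := by
        rw [hlam'', Finset.sum_update_of_mem (Finset.mem_univ j₀)]
        have : ∑ j, lam' j = lam' j₀ + ∑ x ∈ Finset.univ \ {j₀}, lam' x := by
          rw [← Finset.sum_eq_add_sum_sdiff_singleton_of_mem (Finset.mem_univ j₀)]
        omega
      rw [← hsum'']
      exact hG
    choose cc hccGood hccEq using Hmerge
    -- assemble
    set v : Multiset ℕ → MvPolynomial (Fin n) ℝ := fun μ => (μ.map (psum n)).prod with hv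
    set c : Multiset ℕ →₀ ℝ :=
      Finsupp.mapDomain (fun μ => a ::ₘ μ) c₁ - ∑ j₀ : Fin (t + 1), cc j₀ with hcdef
    refine ⟨c, ?_, ?_⟩
    · -- support condition
      intro μ hμ
      rw [hcdef] at hμ
      have := Finsupp.support_sub hμ
      rw [Finset.mem_union] at this
      rcases this with h | h
      · have := Finsupp.mapDomain_support h
        rw [Finset.mem_image] at this
        obtain ⟨μ₀, hμ₀, rfl⟩ := this
        obtain ⟨hpos₀, hsum₀, b, ν, rfl, hb, hν⟩ := hc₁Good μ₀ hμ₀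
        refine ⟨?_, ?_, b, a ::ₘ ν, Multiset.cons_swap a b ν, hb, ?_⟩
        · intro x hx
          rw [Multiset.mem_cons] at hx
          rcases hx with rfl | hx
          · exact hapos
          · exact hpos₀ x hx
        · rw [Multiset.sum_cons, hsum₀]; omega
        · intro x hx
          rw [Multiset.mem_cons] at hx
          rcases hx with rfl | hx
          · exact hadvd
          · exact hν x hx
      · have := Finsupp.support_finset_sum h
        rw [Finset.mem_biUnion] at this
        obtain ⟨j₀, -, hj₀⟩ := this
        exact hccGood j₀ μ hj₀
    · -- the equation
      have hrec := psum_mul_mSym n (t + 1) lam' a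
      rw [hsnoc] at hrec
      have key : mSym n (t + 2) lam
          = psum n a * mSym n (t + 1) lam'
            - ∑ j₀ : Fin (t + 1), mSym n (t + 1) (Function.update lam' j₀ (lam' j₀ + a)) := by
        rw [← hms, hrec]; ring
      rw [key, hcdef, map_sub, map_sum, Finsupp.linearCombination_mapDomain]
      congr 1
      · rw [hc₁Eq, Finsupp.linearCombination_apply, Finsupp.linearCombination_apply,
          Finsupp.sum, Finsupp.sum, Finset.mul_sum]
        refine Finset.sum_congr rfl fun μ _ => ?_
        rw [mul_smul_comm]
        congr 1
        rw [hv]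
        simp only [Function.comp_apply, Multiset.map_cons, Multiset.prod_cons]
      · exact Finset.sum_congr rfl fun j₀ _ => hccEq j₀

lemma good_card_le (m k n : ℕ) (hm : 1 ≤ m) (hk : 2 ≤ k) (hn : k - 1 ≤ n) {S : ℕ}
    (hS : S ≤ (m + 1) * (k - 1) - 1) {μ : Multiset ℕ}
    (hμpos : ∀ b ∈ μ, 0 < b) (hμsum : μ.sum = S)
    (hstr : ∃ a ν, μ = a ::ₘ ν ∧ a % (m + 1) = m ∧ ∀ b ∈ ν, (m + 1) ∣ b) :
    Multiset.card μ ≤ n := by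
  obtain ⟨a, ν, rfl, ha, hν⟩ := hstr
  have hale : m ≤ a := by
    have := Nat.mod_le a (m + 1)
    omega
  have hν' : ∀ b ∈ ν, m + 1 ≤ b := fun b hb =>
    Nat.le_of_dvd (hμpos b (Multiset.mem_cons_of_mem hb)) (hν b hb)
  have hsumν : Multiset.card ν * (m + 1) ≤ ν.sum := by
    have := Multiset.card_nsmul_le_sum hν'
    simpa [smul_eq_mul] using this
  have hsum' : (a ::ₘ ν).sum = a + ν.sum := Multiset.sum_cons a ν
  have h1 : (Multiset.card ν + 1) * (m + 1) ≤ S + 1 := by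
    calc (Multiset.card ν + 1) * (m + 1)
        = Multiset.card ν * (m + 1) + (m + 1) := by ring
      _ ≤ ν.sum + (m + 1) := by omega
      _ ≤ ν.sum + a + 1 := by omega
      _ = S + 1 := by omega
  have h2 : S + 1 ≤ (m + 1) * (k - 1) := by
    have hpos : 0 < (m + 1) * (k - 1) := Nat.mul_pos (by omega) (by omega)
    set P := (m + 1) * (k - 1) with hP
    omega
  have h3 : (Multiset.card ν + 1) * (m + 1) ≤ (k - 1) * (m + 1) := by
    calc (Multiset.card ν + 1) * (m + 1) ≤ S + 1 := h1
      _ ≤ (m + 1) * (k - 1) := h2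
      _ = (k - 1) * (m + 1) := by ring
  have h4 : Multiset.card ν + 1 ≤ k - 1 :=
    Nat.le_of_mul_le_mul_right h3 (by omega)
  have : Multiset.card (a ::ₘ ν) = Multiset.card ν + 1 := by simp
  omega

end Indep

/-- if `λ₁+⋯+λ_t ≤ (m+1)(k-1)-1` with exactly one `λ_i ≡ m (mod m+1)`
and all the others divisible by `m+1`, then `m_{λ₁,…,λ_t}` has a unique expansion as a
linear combination of products of power sums `p_{μ₁}⋯p_{μ_s}` over multisets `μ` of
positive integers with `μ.sum = λ₁+⋯+λ_t`, exactly one `μ_j ≡ m (mod m+1)`, and all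
other `μ_j` divisible by `m+1`. -/
theorem stmt19 (m k n t : ℕ) (hm : 1 ≤ m) (hk : 2 ≤ k) (hn : k - 1 ≤ n)
    (lam : Fin t → ℕ) (hpos : ∀ j, 0 < lam j)
    (hsum : ∑ j, lam j ≤ (m + 1) * (k - 1) - 1)
    (hcong : ∃ i₀ : Fin t, lam i₀ % (m + 1) = m ∧ ∀ i, i ≠ i₀ → (m + 1) ∣ lam i) :
    ∃! c : Multiset ℕ →₀ ℝ,
      (∀ μ ∈ c.support, (∀ b ∈ μ, 0 < b) ∧ μ.sum = ∑ j, lam j ∧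
        ∃ (a : ℕ) (ν : Multiset ℕ), μ = a ::ₘ ν ∧ a % (m + 1) = m ∧ ∀ b ∈ ν, (m + 1) ∣ b) ∧
      mSym n t lam = c.sum (fun μ coef => coef • (μ.map (psum n)).prod) := by
  classical
  obtain ⟨c, hGood, hEq⟩ := exists_expansion m n t lam hpos hcong
  refine ⟨c, ⟨fun μ hμ => hGood μ hμ, ?_⟩, ?_⟩
  · rw [hEq, Finsupp.linearCombination_apply]
  · rintro c' ⟨hc'Good, hc'Eq⟩
    have hzero : ((c' - c).sum fun μ coef => coef • (μ.map (psum n)).prod) = 0 := by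
      have h1 : (Finsupp.linearCombination ℝ
          (fun μ : Multiset ℕ => (μ.map (psum n)).prod)) (c' - c) = 0 := by
        rw [map_sub, ← hEq, Finsupp.linearCombination_apply, ← hc'Eq, sub_self]
      rw [← Finsupp.linearCombination_apply, h1]
    have hsupp : ∀ μ ∈ (c' - c).support,
        (∀ b ∈ μ, 0 < b) ∧ Multiset.card μ ≤ n := by
      intro μ hμ
      have := Finsupp.support_sub hμ
      rw [Finset.mem_union] at this
      rcases this with h | h
      · obtain ⟨hp, hs, hstr⟩ := hc'Good μ h
        exact ⟨hp, good_card_le m k n hm hk hn (hs ▸ hsum) hp rfl hstr⟩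
      · obtain ⟨hp, hs, hstr⟩ := hGood μ h
        exact ⟨hp, good_card_le m k n hm hk hn (hs ▸ hsum) hp rfl hstr⟩
    have := indep (c' - c) hsupp hzero
    exact sub_eq_zero.mp this
end
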